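/- arXiv:1002.2731 — 7 statements merged into one kernel-verified Lean document; each statement's English description precedes it below -/
import Mathlib

section
/- For every dyadic rational point m/2^k in (0,1), the Takagi function T(x) = Σ_{n≥1} 2^{-n} φ^{(n)}(x), where φ is the tent map φ(x) = min(2x, 2-2x) on [0,1] and φ^{(n)} its n-th iterate, satisfies T(k/2^m) = 2^{-m} Σ_{j=0}^{k-1} (m - 2 s_j), where s_j denotes the number of ones in the binary representation of the integer j. -/
open Filter Topology Set

noncomputable def tent (x : ℝ) : ℝ := min (2*x) (2-2*x)

noncomputable def takagi (x : ℝ) : ℝ := ∑' n : ℕ, tent^[n+1] x / 2^(n+1)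

/-! Auxiliary digit-sum machinery -/

def sN (n : ℕ) : ℕ := (Nat.digits 2 n).sum

lemma sN_rec (n : ℕ) : sN n = n % 2 + sN (n / 2) := by
  rcases n with _ | n
  · simp [sN]
  · rw [sN, Nat.digits_def' (by norm_num : 1 < 2) (Nat.succ_pos n)]
    simp [sN]

lemma sN_two_mul_add (c d : ℕ) (hd : d < 2) : sN (2 * c + d) = d + sN c := by
  rw [sN_rec]
  congr 1
  · omega
  · congr 1; omega

lemma sN_compl : ∀ r : ℕ, ∀ i < 2^r, sN i + sN (2^r - 1 - i) = r := by
  intro r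
  induction r with
  | zero =>
    intro i hi
    interval_cases i
    simp [sN]
  | succ r ih =>
    intro i hi
    have hp : 2^(r+1) = 2 * 2^r := by ring
    have hb : i % 2 < 2 := Nat.mod_lt _ (by norm_num)
    have hq : i / 2 < 2^r := by omega
    have h1 : i = 2 * (i / 2) + i % 2 := by omega
    have h2 : 2^(r+1) - 1 - i = 2 * (2^r - 1 - i/2) + (1 - i % 2) := by omega
    have key := ih (i/2) hq
    calc sN i + sN (2^(r+1) - 1 - i)
        = sN (2 * (i/2) + i % 2) + sN (2 * (2^r - 1 - i/2) + (1 - i % 2)) := by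
          rw [← h1, ← h2]
      _ = (i % 2 + sN (i/2)) + ((1 - i % 2) + sN (2^r - 1 - i/2)) := by
          rw [sN_two_mul_add _ _ hb, sN_two_mul_add _ _ (by omega)]
      _ = r + 1 := by omega

noncomputable def T (m j : ℕ) : ℝ := (m : ℝ) - 2 * (sN j : ℝ)

noncomputable def S (m k : ℕ) : ℝ := ∑ j ∈ Finset.range k, T m j

lemma T_compl (r i : ℕ) (hi : i < 2^r) : T r (2^r - 1 - i) = - T r i := by
  have h := sN_compl r i hi
  have h' : (sN i : ℝ) + (sN (2^r - 1 - i) : ℝ) = (r : ℝ) := by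
    exact_mod_cast congrArg (Nat.cast : ℕ → ℝ) h
  unfold T
  linarith

lemma S_full (r : ℕ) : S r (2^r) = 0 := by
  have h := Finset.sum_range_reflect (fun j => T r j) (2^r)
  have h2 : ∀ j ∈ Finset.range (2^r), T r (2^r - 1 - j) = - T r j := by
    intro j hj
    exact T_compl r j (Finset.mem_range.mp hj)
  rw [Finset.sum_congr rfl h2] at h
  have h3 : (∑ j ∈ Finset.range (2^r), - T r j) = - S r (2^r) := by
    rw [Finset.sum_neg_distrib]; rfl
  rw [h3] at h
  have : S r (2^r) = - S r (2^r) := h.symm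
  linarith

lemma S_refl (r a b : ℕ) (hab : a + b = 2^r) : S r a = S r b := by
  have hsplit : S r a + ∑ i ∈ Finset.Ico a (2^r), T r i = S r (2^r) :=
    Finset.sum_range_add_sum_Ico _ (Nat.le.intro hab)
  have hIco : ∑ i ∈ Finset.Ico a (2^r), T r i = ∑ i ∈ Finset.range b, T r (a + i) := by
    have hb : b = 2^r - a := Nat.eq_sub_of_add_eq' hab
    rw [Finset.sum_Ico_eq_sum_range, ← hb]
  have hneg : ∑ i ∈ Finset.range b, T r (a + i) = - S r b := by
    rw [← Finset.sum_range_reflect (fun i => T r (a + i)) b]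
    have h2 : ∀ i ∈ Finset.range b, T r (a + (b - 1 - i)) = - T r i := by
      intro i hi
      have hi' : i < b := Finset.mem_range.mp hi
      have : a + (b - 1 - i) = 2^r - 1 - i := by omega
      rw [this]
      exact T_compl r i (by omega)
    rw [Finset.sum_congr rfl h2, Finset.sum_neg_distrib]
    rfl
  have := S_full r
  rw [hIco, hneg] at hsplit
  linarith

lemma S_succ (m k : ℕ) : S (m+1) k = k + S m k := by
  have h : ∀ j ∈ Finset.range k, T (m+1) j = 1 + T m j := by
    intro j _
    unfold T
    push_cast
    ring
  unfold S
  rw [Finset.sum_congr rfl h, Finset.sum_add_distrib, Finset.sum_const, nsmul_eq_mul, mul_one,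
    Finset.card_range]

/-! Tent map facts -/

lemma tent_mem {x : ℝ} (hx : x ∈ Icc (0:ℝ) 1) : tent x ∈ Icc (0:ℝ) 1 := by
  obtain ⟨h0, h1⟩ := hx
  constructor
  · exact le_min (by linarith) (by linarith)
  · rcases le_total x (1/2) with h | h
    · exact le_trans (min_le_left _ _) (by linarith)
    · exact le_trans (min_le_right _ _) (by linarith)

lemma tent_iter_mem {x : ℝ} (hx : x ∈ Icc (0:ℝ) 1) (n : ℕ) : tent^[n] x ∈ Icc (0:ℝ) 1 := by
  induction n with
  | zero => simpa using hx
  | succ n ih =>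
    rw [Function.iterate_succ_apply']
    exact tent_mem ih

lemma takagi_summable {x : ℝ} (hx : x ∈ Icc (0:ℝ) 1) :
    Summable (fun n : ℕ => tent^[n+1] x / 2^(n+1)) := by
  apply Summable.of_nonneg_of_le (f := fun n : ℕ => (1/2 : ℝ)^(n+1))
  · intro n
    have := (tent_iter_mem hx (n+1)).1
    positivity
  · intro n
    have h := (tent_iter_mem hx (n+1)).2
    rw [div_le_iff₀ (by positivity)]
    have heq : ((1/2:ℝ))^(n+1) * 2^(n+1) = 1 := by
      rw [← mul_pow]; norm_num
    linarith
  · have h := (summable_geometric_of_lt_one (by norm_num : (0:ℝ) ≤ 1/2)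
      (by norm_num : (1/2:ℝ) < 1)).mul_left (1/2)
    apply h.congr
    intro n
    rw [pow_succ]
    ring

lemma takagi_funEq {x : ℝ} (hx : x ∈ Icc (0:ℝ) 1) :
    takagi x = tent x / 2 + takagi (tent x) / 2 := by
  have hs := takagi_summable hx
  unfold takagi
  rw [Summable.tsum_eq_zero_add hs]
  congr 1
  · norm_num
  · rw [← tsum_div_const]
    congr 1
    funext n
    rw [show (n + 1 + 1) = (n + 1) + 1 from rfl, Function.iterate_succ_apply]
    rw [pow_succ]
    ring

lemma tent_zero : tent (0:ℝ) = 0 := by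
  unfold tent; norm_num

lemma takagi_zero : takagi (0:ℝ) = 0 := by
  unfold takagi
  have : ∀ n : ℕ, tent^[n+1] (0:ℝ) / 2^(n+1) = 0 := by
    intro n
    rw [Function.iterate_fixed tent_zero]
    simp
  rw [tsum_congr this, tsum_zero]

lemma takagi_one : takagi (1:ℝ) = 0 := by
  unfold takagi
  have h1 : tent (1:ℝ) = 0 := by unfold tent; norm_num
  have : ∀ n : ℕ, tent^[n+1] (1:ℝ) / 2^(n+1) = 0 := by
    intro n
    rw [Function.iterate_succ_apply, h1, Function.iterate_fixed tent_zero]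
    simp
  rw [tsum_congr this, tsum_zero]

lemma takagi_main : ∀ m : ℕ, ∀ k : ℕ, k ≤ 2^m →
    takagi ((k : ℝ) / 2^m) = (1 / 2^m : ℝ) * S m k := by
  intro m
  induction m with
  | zero =>
    intro k hk
    interval_cases k
    · simpa [S] using takagi_zero
    · have : S 0 1 = 0 := by simp [S, T, sN]
      rw [this]
      simpa using takagi_one
  | succ m ih =>
    intro k hk
    have hp : 2^(m+1) = 2 * 2^m := by ring
    have hpR : (2:ℝ)^(m+1) = 2 * 2^m := by ring
    have h2m : (0:ℝ) < 2^m := by positivity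
    have h2m1 : (0:ℝ) < 2^(m+1) := by positivity
    have hkR : (k:ℝ) ≤ 2^(m+1) := by
      calc (k:ℝ) ≤ (2^(m+1) : ℕ) := by exact_mod_cast hk
        _ = (2:ℝ)^(m+1) := by push_cast; ring
    have hx : (k:ℝ) / 2^(m+1) ∈ Icc (0:ℝ) 1 := by
      constructor
      · positivity
      · rw [div_le_one h2m1]; linarith
    rcases le_or_gt k (2^m) with h | h
    · -- left half: tent x = 2x = k / 2^m
      have hkR' : (k:ℝ) ≤ 2^m := by exact_mod_cast h
      have htent : tent ((k:ℝ) / 2^(m+1)) = (k:ℝ) / 2^m := by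
        unfold tent
        rw [min_eq_left]
        · rw [hpR]
          field_simp
        · rw [hpR]
          have hx2 : 2 * ((k:ℝ) / (2 * 2^m)) = k / 2^m := by field_simp
          rw [hx2]
          have : (k:ℝ) / 2^m ≤ 1 := by rw [div_le_one h2m]; linarith
          linarith
      rw [takagi_funEq hx, htent, ih k h, S_succ, pow_succ]
      ring
    · -- right half: tent x = 2 - 2x = (2^(m+1) - k) / 2^m
      set k' := 2^(m+1) - k with hk'
      have hk'le : k' ≤ 2^m := by omega
      have hk'R : (k':ℝ) = 2^(m+1) - k := by
        rw [hk']
        push_cast [Nat.cast_sub hk]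
        ring
      have htent : tent ((k:ℝ) / 2^(m+1)) = (k':ℝ) / 2^m := by
        unfold tent
        rw [min_eq_right]
        · rw [hk'R, hpR]
          field_simp
        · have hkR2 : (2:ℝ)^m < k := by exact_mod_cast h
          rw [hpR]
          have hx2 : 2 * ((k:ℝ) / (2 * 2^m)) = k / 2^m := by field_simp
          rw [hx2]
          have : 1 ≤ (k:ℝ) / 2^m := by rw [le_div_iff₀ h2m]; linarith
          linarith
      have hrefl : S (m+1) k = S (m+1) k' := S_refl (m+1) k k' (by omega)
      rw [takagi_funEq hx, htent, ih k' hk'le, hrefl, S_succ, pow_succ]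
      ring

theorem takagi_dyadic (m k : ℕ) (hk : 0 < k) (hkm : k < 2^m) :
    takagi ((k : ℝ) / 2^m) =
      (1 / 2^m : ℝ) * ∑ j ∈ Finset.range k, ((m : ℝ) - 2 * ((Nat.digits 2 j).sum : ℝ)) := by
  simpa [S, T, sN] using takagi_main m k hkm.le
end

section
/- Let (a_n) be a strictly increasing sequence of positive integers. If a_{n+1} - 2a_n + 2n - log₂(a_{n+1} - a_n) → -∞ as n → ∞, then a_n - 2n → ∞ as n → ∞. -/
open Filter Topology Set

lemma logb_two_nat_le (d : ℕ) (hd : 1 ≤ d) : Real.logb 2 d ≤ d := by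
  have h2 : (d : ℝ) ≤ (2 : ℝ) ^ (d : ℕ) := by
    exact_mod_cast (Nat.lt_two_pow_self (n := d)).le
  have := Real.logb_le_logb_of_le (b := 2) one_lt_two
    (by exact_mod_cast hd.trans_lt' zero_lt_one : (0:ℝ) < d) h2
  calc Real.logb 2 d ≤ Real.logb 2 ((2:ℝ) ^ (d:ℕ)) := this
    _ = d := by
        rw [← Real.rpow_natCast 2 d, Real.logb_rpow (by norm_num) (by norm_num)]

theorem cond_implies_an_sub_two_n_tendsto_top
    (a : ℕ → ℕ) (ha : StrictMono a) (ha1 : 1 ≤ a 0)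
    (h : Tendsto (fun n : ℕ =>
        (a (n+1) : ℝ) - 2 * (a n : ℝ) + 2 * (n + 1)
          - Real.logb 2 ((a (n+1) : ℝ) - (a n : ℝ))) atTop atBot) :
    Tendsto (fun n : ℕ => (a n : ℝ) - 2 * (n + 1)) atTop atTop := by
  have hneg : Tendsto (fun n : ℕ =>
      -((a (n+1) : ℝ) - 2 * (a n : ℝ) + 2 * (n + 1)
          - Real.logb 2 ((a (n+1) : ℝ) - (a n : ℝ)))) atTop atTop :=
    tendsto_neg_atBot_atTop.comp h
  refine tendsto_atTop_mono (fun n => ?_) hneg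
  have hlt : a n < a (n+1) := ha (Nat.lt_succ_self n)
  have hcast : ((a (n+1) : ℝ) - (a n : ℝ)) = ((a (n+1) - a n : ℕ) : ℝ) := by
    rw [Nat.cast_sub hlt.le]
  have hlog : Real.logb 2 ((a (n+1) : ℝ) - (a n : ℝ)) ≤ ((a (n+1) : ℝ) - (a n : ℝ)) := by
    rw [hcast]
    exact logb_two_nat_le _ (Nat.one_le_iff_ne_zero.mpr (Nat.sub_ne_zero_of_lt hlt))
  linarith
end

section
/- Let x ∈ (0,1) be non-dyadic with binary digits ε_k, and write x = Σ 2^{-a_n} with (a_n) strictly increasing. Suppose D_k := Σ_{j=1}^k (1 - 2ε_j) → ∞ (i.e., a_n - 2n → ∞) and the runs of consecutive zeros in the binary expansion of x are bounded, i.e., a_{n+1} - a_n ≤ M+1 for all n and some M. Then T'(x) = +∞, where T is the Takagi function. -/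
open Filter Topology Set

def IsDyadic (x : ℝ) : Prop := ∃ k : ℤ, ∃ m : ℕ, x = (k : ℝ) / 2^m

noncomputable def sdist (y : ℝ) : ℝ := |y - round y|

lemma sdist_nonneg (y : ℝ) : 0 ≤ sdist y := abs_nonneg _

lemma sdist_le_half (y : ℝ) : sdist y ≤ 1/2 := abs_sub_round y

lemma sdist_le (y : ℝ) (k : ℤ) : sdist y ≤ |y - k| := round_le y k

lemma sdist_lipschitz (u v : ℝ) : |sdist u - sdist v| ≤ |u - v| := by
  have h1 : sdist u ≤ |u - round v| := sdist_le u (round v)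
  have h2 : |u - round v| ≤ |u - v| + |v - round v| := by
    have := abs_sub_le u v (round v); linarith [this]
  have h3 : sdist v ≤ |v - round u| := sdist_le v (round u)
  have h4 : |v - round u| ≤ |v - u| + |u - round u| := by
    have := abs_sub_le v u (round u); linarith [this]
  have h5 : |v - u| = |u - v| := abs_sub_comm v u
  rw [abs_sub_le_iff]
  constructor
  · simp only [sdist] at *; linarith
  · simp only [sdist] at *; linarith

lemma sdist_int_add (k : ℤ) (y : ℝ) : sdist ((k : ℝ) + y) = sdist y := by
  simp only [sdist, round_intCast_add]
  congr 1
  push_cast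
  ring

lemma sdist_eq_min (y : ℝ) : sdist y = min (Int.fract y) (1 - Int.fract y) :=
  abs_sub_round_eq_min y

lemma sdist_eq_left {k : ℤ} {y : ℝ} (h1 : (k:ℝ) ≤ y) (h2 : y ≤ k + 1/2) :
    sdist y = y - k := by
  have hf : ⌊y⌋ = k := by
    rw [Int.floor_eq_iff]
    exact ⟨h1, by push_cast; linarith⟩
  have hfr : Int.fract y = y - k := by rw [Int.fract, hf]
  rw [sdist_eq_min, hfr, min_eq_left]
  linarith

lemma sdist_eq_right {k : ℤ} {y : ℝ} (h1 : (k:ℝ) + 1/2 ≤ y) (h2 : y ≤ k + 1) :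
    sdist y = (k:ℝ) + 1 - y := by
  rcases eq_or_lt_of_le h2 with h | h
  · have : y = ((k+1 : ℤ) : ℝ) := by push_cast; linarith
    rw [this, sdist_eq_min, Int.fract_intCast]
    norm_num
  · have hf : ⌊y⌋ = k := by
      rw [Int.floor_eq_iff]
      constructor
      · linarith
      · push_cast; linarith
    have hfr : Int.fract y = y - k := by rw [Int.fract, hf]
    rw [sdist_eq_min, hfr, min_eq_right] <;> [skip; linarith]
    ring

lemma tent_eq_sdist {y : ℝ} (h0 : 0 ≤ y) (h1 : y ≤ 1) : tent y = 2 * sdist y := by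
  rcases le_or_gt y (1/2) with h | h
  · rw [show sdist y = y - (0:ℤ) from sdist_eq_left (by exact_mod_cast h0) (by push_cast; linarith)]
    simp only [tent]
    rw [min_eq_left (by linarith)]
    push_cast; ring
  · rw [show sdist y = ((0:ℤ):ℝ) + 1 - y from sdist_eq_right (by push_cast; linarith) (by push_cast; linarith)]
    simp only [tent]
    rw [min_eq_right (by linarith)]
    push_cast; ring

lemma tent_two_sdist (y : ℝ) : tent (2 * sdist y) = 2 * sdist (2*y) := by
  -- reduce to fractional part
  have key : ∀ f : ℝ, 0 ≤ f → f < 1 → tent (2 * sdist f) = 2 * sdist (2*f) := by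
    intro f hf0 hf1
    rcases le_or_gt f (1/2) with h | h
    · have hs : sdist f = f - (0:ℤ) := sdist_eq_left (by exact_mod_cast hf0) (by push_cast; linarith)
      rcases le_or_gt f (1/4) with h2 | h2
      · have hs2 : sdist (2*f) = 2*f - (0:ℤ) := sdist_eq_left (by push_cast; linarith) (by push_cast; linarith)
        rw [hs, hs2]; simp only [tent]; rw [min_eq_left (by push_cast; linarith)]; push_cast; ring
      · have hs2 : sdist (2*f) = ((0:ℤ):ℝ) + 1 - 2*f := sdist_eq_right (by push_cast; linarith) (by push_cast; linarith)
        rw [hs, hs2]; simp only [tent]; rw [min_eq_right (by push_cast; linarith)]; push_cast; ring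
    · have hs : sdist f = ((0:ℤ):ℝ) + 1 - f := sdist_eq_right (by push_cast; linarith) (by push_cast; linarith)
      rcases le_or_gt f (3/4) with h2 | h2
      · have hs2 : sdist (2*f) = 2*f - (1:ℤ) := sdist_eq_left (by push_cast; linarith) (by push_cast; linarith)
        rw [hs, hs2]; simp only [tent]; rw [min_eq_right (by push_cast; linarith)]; push_cast; ring
      · have hs2 : sdist (2*f) = ((1:ℤ):ℝ) + 1 - 2*f := sdist_eq_right (by push_cast; linarith) (by push_cast; linarith)
        rw [hs, hs2]; simp only [tent]; rw [min_eq_left (by push_cast; linarith)]; push_cast; ring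
  have h1 : sdist y = sdist (Int.fract y) := by
    conv_lhs => rw [← Int.floor_add_fract y]
    rw [sdist_int_add]
  have h2 : sdist (2*y) = sdist (2 * Int.fract y) := by
    have : 2*y = ((2*⌊y⌋ : ℤ):ℝ) + 2 * Int.fract y := by
      push_cast; rw [Int.fract]; ring
    rw [this, sdist_int_add]
  rw [h1, h2]
  exact key _ (Int.fract_nonneg y) (Int.fract_lt_one y)

lemma tent_iter_eq {x : ℝ} (h0 : 0 ≤ x) (h1 : x ≤ 1) (n : ℕ) :
    tent^[n+1] x = 2 * sdist (2^n * x) := by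
  induction n with
  | zero => simpa using tent_eq_sdist h0 h1
  | succ n ih =>
    rw [Function.iterate_succ_apply', ih, tent_two_sdist]
    ring_nf

lemma summable_sdist (y : ℝ) : Summable (fun n : ℕ => sdist (2^n * y) / 2^n) := by
  have hg : Summable (fun n : ℕ => (1/2:ℝ)^n) :=
    summable_geometric_of_lt_one (by norm_num) (by norm_num)
  refine Summable.of_nonneg_of_le (fun n => div_nonneg (sdist_nonneg _) (by positivity)) (fun n => ?_) hg
  rw [div_le_iff₀ (by positivity)]
  calc sdist (2^n * y) ≤ 1/2 := sdist_le_half _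
  _ ≤ (1/2:ℝ)^n * 2^n := by
      rw [div_pow, one_pow, div_mul_cancel₀ _ (by positivity : (2:ℝ)^n ≠ 0)]
      norm_num

lemma takagi_eq_sum {x : ℝ} (h0 : 0 ≤ x) (h1 : x ≤ 1) :
    takagi x = ∑' n : ℕ, sdist (2^n * x) / 2^n := by
  unfold takagi
  apply tsum_congr
  intro n
  rw [tent_iter_eq h0 h1 n, pow_succ]
  field_simp
section Digits

variable {x : ℝ} {a : ℕ → ℕ}

-- least index j with p < a j
noncomputable def Jn (a : ℕ → ℕ) (p : ℕ) : ℕ := sInf {j | p < a j}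

lemma a_ge (ha : StrictMono a) (ha1 : 1 ≤ a 0) (n : ℕ) : n + 1 ≤ a n := by
  induction n with
  | zero => exact ha1
  | succ n ih => have := ha (show n < n + 1 by omega); omega

lemma Jn_spec (ha : StrictMono a) (ha1 : 1 ≤ a 0) (p : ℕ) : p < a (Jn a p) := by
  have hne : {j | p < a j}.Nonempty := ⟨p, by have := a_ge ha ha1 p; simp; omega⟩
  exact Nat.sInf_mem hne

lemma Jn_min {p j : ℕ} (hj : j < Jn a p) : a j ≤ p := by
  have := Nat.notMem_of_lt_sInf hj
  simpa using this

lemma Jn_iff (ha : StrictMono a) (ha1 : 1 ≤ a 0) {p j : ℕ} : j < Jn a p ↔ a j ≤ p := by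
  constructor
  · exact Jn_min
  · intro h
    by_contra hc
    push_neg at hc
    have := ha.monotone hc
    have := Jn_spec ha ha1 p
    omega

lemma summable_pow_a (ha : StrictMono a) (ha1 : 1 ≤ a 0) :
    Summable (fun j : ℕ => (1/2:ℝ)^(a j)) := by
  have hg : Summable (fun n : ℕ => (1/2:ℝ)^n) :=
    summable_geometric_of_lt_one (by norm_num) (by norm_num)
  refine Summable.of_nonneg_of_le (fun n => by positivity) (fun n => ?_) hg
  exact pow_le_pow_of_le_one (by norm_num) (by norm_num) (by have := a_ge ha ha1 n; omega)

lemma two_pow_mul_le {p q : ℕ} (h : q ≤ p) : (2:ℝ)^p * (1/2)^q = 2^(p-q) := by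
  have h1 : (2:ℝ)^p = 2^(p-q) * 2^q := by rw [← pow_add]; congr 1; omega
  have h2 : (2:ℝ)^q * (1/2)^q = 1 := by rw [← mul_pow]; norm_num
  calc (2:ℝ)^p * (1/2)^q = 2^(p-q) * ((2:ℝ)^q * (1/2)^q) := by rw [h1]; ring
  _ = 2^(p-q) := by rw [h2, mul_one]

lemma two_pow_mul_gt {p q : ℕ} (h : p < q) : (2:ℝ)^p * (1/2)^q = (1/2)^(q-p) := by
  have h1 : (1/2:ℝ)^q = (1/2)^(q-p) * (1/2)^p := by rw [← pow_add]; congr 1; omega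
  have h2 : (2:ℝ)^p * (1/2)^p = 1 := by rw [← mul_pow]; norm_num
  calc (2:ℝ)^p * (1/2)^q = ((2:ℝ)^p * (1/2)^p) * (1/2)^(q-p) := by rw [h1]; ring
  _ = (1/2)^(q-p) := by rw [h2, one_mul]

lemma geom_shift (c : ℕ) : ∑' j : ℕ, (1/2:ℝ)^(j+c) = (1/2)^c * 2 := by
  have hg : ∑' j : ℕ, (1/2:ℝ)^j = 2 := by
    rw [tsum_geometric_of_lt_one (by norm_num) (by norm_num)]
    norm_num
  calc ∑' j : ℕ, (1/2:ℝ)^(j+c) = ∑' j : ℕ, (1/2:ℝ)^c * (1/2)^j := by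
        apply tsum_congr; intro j; rw [← pow_add]; ring_nf
  _ = (1/2:ℝ)^c * ∑' j : ℕ, (1/2:ℝ)^j := tsum_mul_left
  _ = (1/2)^c * 2 := by rw [hg]

lemma repr_floor_fract (hnd : ¬ IsDyadic x) (ha : StrictMono a) (ha1 : 1 ≤ a 0)
    (hxa : x = ∑' n : ℕ, (1/2 : ℝ)^(a n)) (p : ℕ) :
    (2:ℝ)^p * x = ((∑ j ∈ Finset.range (Jn a p), 2^(p - a j) : ℕ) : ℝ) +
      ∑' j : ℕ, (1/2:ℝ)^(a (j + Jn a p) - p) ∧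
    Int.fract ((2:ℝ)^p * x) = ∑' j : ℕ, (1/2:ℝ)^(a (j + Jn a p) - p) := by
  classical
  have hsx := summable_pow_a ha ha1
  set Jp := Jn a p with hJp
  have haJp : p < a Jp := Jn_spec ha ha1 p
  have hshift : ∀ j : ℕ, a Jp + j ≤ a (j + Jp) := by
    intro j
    induction j with
    | zero => simp
    | succ j ih => have := ha (show j + Jp < j + 1 + Jp by omega); omega
  have hsum2 : Summable (fun j : ℕ => (2:ℝ)^p * (1/2)^(a j)) := hsx.mul_left _
  have h1 : (2:ℝ)^p * x = ∑' j : ℕ, (2:ℝ)^p * (1/2)^(a j) := by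
    rw [hxa, tsum_mul_left]
  have h2 := Summable.sum_add_tsum_nat_add Jp hsum2
  set N : ℕ := ∑ j ∈ Finset.range Jp, 2^(p - a j) with hN
  have hfin : ∑ j ∈ Finset.range Jp, (2:ℝ)^p * (1/2)^(a j) = (N:ℝ) := by
    rw [hN]
    push_cast
    apply Finset.sum_congr rfl
    intro j hj
    rw [Finset.mem_range] at hj
    rw [two_pow_mul_le (Jn_min hj)]
  set t : ℝ := ∑' j : ℕ, (1/2:ℝ)^(a (j + Jp) - p) with ht
  have htail : ∑' j : ℕ, (2:ℝ)^p * (1/2)^(a (j + Jp)) = t := by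
    apply tsum_congr
    intro j
    exact two_pow_mul_gt (by have := hshift j; omega)
  have heq : (2:ℝ)^p * x = (N:ℝ) + t := by
    rw [h1, ← h2, hfin, htail]
  have hts : Summable (fun j : ℕ => (1/2:ℝ)^(a (j + Jp) - p)) := by
    have : Summable (fun j : ℕ => (2:ℝ)^p * (1/2)^(a (j + Jp))) :=
      ((summable_nat_add_iff (f := fun j : ℕ => (2:ℝ)^p * (1/2)^(a j)) Jp).mpr hsum2)
    apply this.congr
    intro j
    exact two_pow_mul_gt (by have := hshift j; omega)
  have ht0 : 0 ≤ t := tsum_nonneg (fun j => by positivity)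
  have ht1 : t ≤ 1 := by
    have hg : Summable (fun j : ℕ => (1/2:ℝ)^(j+1)) := by
      have hgeo : Summable (fun n : ℕ => (1/2:ℝ)^n) :=
        summable_geometric_of_lt_one (by norm_num) (by norm_num)
      refine Summable.of_nonneg_of_le (fun n => by positivity) (fun n => ?_) hgeo
      exact pow_le_pow_of_le_one (by norm_num) (by norm_num) (by omega)
    calc t ≤ ∑' j : ℕ, (1/2:ℝ)^(j+1) := by
          apply Summable.tsum_le_tsum _ hts hg
          intro j
          apply pow_le_pow_of_le_one (by norm_num) (by norm_num)
          have := hshift j; omega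
    _ = 1 := by rw [geom_shift 1]; norm_num
  have htne : t ≠ 1 := by
    intro hteq
    apply hnd
    refine ⟨(N:ℤ) + 1, p, ?_⟩
    rw [eq_div_iff (by positivity)]
    push_cast
    rw [mul_comm]
    rw [heq, hteq]
  have htlt : t < 1 := lt_of_le_of_ne ht1 htne
  refine ⟨heq, ?_⟩
  rw [heq]
  have : (N:ℝ) + t = ((N:ℤ):ℝ) + t := by push_cast; ring
  rw [this, Int.fract_intCast_add, Int.fract_eq_self.mpr ⟨ht0, htlt⟩]

lemma digit_iff (hnd : ¬ IsDyadic x) (ha : StrictMono a) (ha1 : 1 ≤ a 0)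
    (hxa : x = ∑' n : ℕ, (1/2 : ℝ)^(a n)) (p : ℕ) :
    (¬ ∃ j, a j = p + 1) ↔ Int.fract ((2:ℝ)^p * x) < 1/2 := by
  classical
  obtain ⟨heq, hfr⟩ := repr_floor_fract hnd ha ha1 hxa p
  set Jp := Jn a p with hJp
  have haJp : p < a Jp := Jn_spec ha ha1 p
  have hshift : ∀ j : ℕ, a Jp + j ≤ a (j + Jp) := by
    intro j
    induction j with
    | zero => simp
    | succ j ih => have := ha (show j + Jp < j + 1 + Jp by omega); omega
  have hts : Summable (fun j : ℕ => (1/2:ℝ)^(a (j + Jp) - p)) := by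
    have hg : Summable (fun n : ℕ => (1/2:ℝ)^n) :=
      summable_geometric_of_lt_one (by norm_num) (by norm_num)
    refine Summable.of_nonneg_of_le (fun n => by positivity) (fun j => ?_) hg
    exact pow_le_pow_of_le_one (by norm_num) (by norm_num) (by have := hshift j; omega)
  rw [hfr]
  by_cases hc : a Jp = p + 1
  · constructor
    · intro h; exact absurd ⟨Jp, hc⟩ h
    · intro h
      exfalso
      have hge : (1/2:ℝ)^(a (0 + Jp) - p) ≤ ∑' j : ℕ, (1/2:ℝ)^(a (j + Jp) - p) :=
        Summable.le_tsum hts 0 (fun j _ => by positivity)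
      simp only [zero_add] at hge
      have he : a Jp - p = 1 := by omega
      rw [he] at hge
      norm_num at hge
      linarith
  · have hc2 : p + 2 ≤ a Jp := by omega
    have hnone : ¬ ∃ j, a j = p + 1 := by
      rintro ⟨j, hj⟩
      have h1 : ¬ j < Jn a p := by
        rw [Jn_iff ha ha1]; omega
      push_neg at h1
      have h2 := ha.monotone h1
      rw [← hJp] at h2
      omega
    have hlt : ∑' j : ℕ, (1/2:ℝ)^(a (j + Jp) - p) < 1/2 := by
      have hle : ∑' j : ℕ, (1/2:ℝ)^(a (j + Jp) - p) ≤ 1/2 := by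
        have hg : Summable (fun j : ℕ => (1/2:ℝ)^(j+2)) := by
          have hgeo : Summable (fun n : ℕ => (1/2:ℝ)^n) :=
            summable_geometric_of_lt_one (by norm_num) (by norm_num)
          refine Summable.of_nonneg_of_le (fun n => by positivity) (fun n => ?_) hgeo
          exact pow_le_pow_of_le_one (by norm_num) (by norm_num) (by omega)
        calc ∑' j : ℕ, (1/2:ℝ)^(a (j + Jp) - p) ≤ ∑' j : ℕ, (1/2:ℝ)^(j+2) := by
              apply Summable.tsum_le_tsum _ hts hg
              intro j
              apply pow_le_pow_of_le_one (by norm_num) (by norm_num)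
              have := hshift j; omega
        _ = 1/2 := by rw [geom_shift 2]; norm_num
      rcases lt_or_eq_of_le hle with h | h
      · exact h
      · exfalso
        apply hnd
        refine ⟨2 * (∑ j ∈ Finset.range Jp, 2^(p - a j) : ℕ) + 1, p + 1, ?_⟩
        rw [eq_div_iff (by positivity)]
        have h2 : x * 2^(p+1) = ((2:ℝ)^p * x) * 2 := by ring
        rw [h2, heq, h]
        push_cast
        ring
    exact ⟨fun _ => hlt, fun _ => hnone⟩

lemma zero_run_bound (ha : StrictMono a) (ha1 : 1 ≤ a 0) {M : ℕ}
    (hM : ∀ n, a (n+1) - a n ≤ M + 1) {p q : ℕ} (hp : a 0 < p)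
    (hq : ∀ r, p ≤ r → r ≤ q → ¬ ∃ j, a j = r) : q + 1 ≤ p + M := by
  set k := Jn a (p-1) with hk
  have hk0 : 0 < k := by
    rw [hk]
    have : (0:ℕ) < Jn a (p-1) ↔ a 0 ≤ p - 1 := Jn_iff ha ha1
    rw [this]; omega
  have hak : p - 1 < a k := Jn_spec ha ha1 (p-1)
  have hak1 : a (k-1) ≤ p - 1 := Jn_min (by omega)
  have hakp : p ≤ a k := by omega
  have haknotin : a k > q := by
    by_contra hle
    push_neg at hle
    exact hq (a k) hakp hle ⟨k, rfl⟩
  have hgap : a k ≤ a (k-1) + M + 1 := by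
    have h1 := hM (k-1)
    have h2 : k - 1 + 1 = k := by omega
    rw [h2] at h1
    have := ha.monotone (show k - 1 ≤ k by omega)
    omega
  omega

lemma Jn_succ (ha : StrictMono a) (ha1 : 1 ≤ a 0) (m : ℕ) [Decidable (∃ j, a j = m + 1)] :
    Jn a (m+1) = if ∃ j, a j = m + 1 then Jn a m + 1 else Jn a m := by
  split_ifs with hc
  · obtain ⟨j0, hj0⟩ := hc
    have hj0eq : j0 = Jn a m := by
      have h1 : ¬ j0 < Jn a m := by rw [Jn_iff ha ha1]; omega
      have h2 : ¬ Jn a m < j0 := by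
        intro hlt
        have := ha hlt
        have := Jn_spec ha ha1 m
        omega
      omega
    apply le_antisymm
    · apply Nat.sInf_le
      have : a (j0 + 1) > a j0 := ha (Nat.lt_succ_self j0)
      simp only [Set.mem_setOf_eq]
      rw [← hj0eq]
      omega
    · rw [Nat.succ_le_iff, Jn_iff ha ha1, ← hj0eq]
      omega
  · apply le_antisymm
    · apply Nat.sInf_le
      simp only [Set.mem_setOf_eq]
      have h1 := Jn_spec ha ha1 m
      have h2 : a (Jn a m) ≠ m + 1 := fun h => hc ⟨_, h⟩
      omega
    · by_contra hlt
      push_neg at hlt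
      have := Jn_min hlt
      have := Jn_spec ha ha1 (m+1)
      omega

open Classical in
lemma Dsum_eq (ha : StrictMono a) (ha1 : 1 ≤ a 0) (m : ℕ) :
    (∑ n ∈ Finset.range m, (if ∃ j, a j = n + 1 then (-1:ℝ) else 1)) =
      (m : ℝ) - 2 * (Jn a m) := by
  classical
  induction m with
  | zero =>
    have h0 : Jn a 0 = 0 := by
      apply Nat.eq_zero_of_le_zero
      apply Nat.sInf_le
      simp only [Set.mem_setOf_eq]
      omega
    simp [h0]
  | succ m ih =>
    rw [Finset.sum_range_succ, ih, Jn_succ ha ha1 m]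
    split_ifs with hc
    · push_cast; try ring
    · push_cast; try ring

end Digits
section Core

lemma even_floor_two_mul_iff (y : ℝ) : Even ⌊2*y⌋ ↔ Int.fract y < 1/2 := by
  have hrepr : (2:ℝ)*y = ((2*⌊y⌋ : ℤ):ℝ) + 2 * Int.fract y := by
    push_cast
    rw [Int.fract]
    ring
  have hfl : ⌊2*y⌋ = 2*⌊y⌋ + ⌊2 * Int.fract y⌋ := by
    rw [hrepr, Int.floor_intCast_add]
  have hf0 : 0 ≤ Int.fract y := Int.fract_nonneg y
  have hf1 : Int.fract y < 1 := Int.fract_lt_one y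
  rcases lt_or_ge (Int.fract y) (1/2) with hlt | hge
  · have : ⌊2 * Int.fract y⌋ = 0 := by
      rw [Int.floor_eq_zero_iff, Set.mem_Ico]
      constructor <;> linarith
    rw [hfl, this]
    simp [parity_simps]
    linarith
  · have : ⌊2 * Int.fract y⌋ = 1 := by
      rw [Int.floor_eq_iff]
      push_cast
      constructor <;> linarith
    rw [hfl, this]
    constructor
    · intro he
      exact absurd he (Int.not_even_iff_odd.mpr (odd_two_mul_add_one _))
    · intro hl
      linarith

open Classical in
lemma core_estimate (x : ℝ) (hx : x ∈ Set.Ioo (0:ℝ) 1) (hnd : ¬ IsDyadic x)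
    (a : ℕ → ℕ) (ha : StrictMono a) (ha1 : 1 ≤ a 0)
    (hxa : x = ∑' n : ℕ, (1/2 : ℝ)^(a n))
    (M : ℕ) (hM : ∀ n, a (n+1) - a n ≤ M + 1)
    (h : ℝ) (hh : h ≠ 0) (hxh : x + h ∈ Set.Ioo (0:ℝ) 1)
    (m : ℕ) (hm0 : a 0 ≤ m) (hm1 : |h| < (1/2)^m) (hm2 : (1/2)^(m+1) ≤ |h|) :
    ((m:ℝ) - 2 * (Jn a m)) - (2*M + 4) ≤ (takagi (x+h) - takagi x) / h := by
  have habs0 : 0 < |h| := abs_pos.mpr hh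
  -- the term function
  set F : ℕ → ℝ := fun n => sdist (2^n*(x+h))/2^n - sdist (2^n*x)/2^n with hF
  have hFs : Summable F := (summable_sdist (x+h)).sub (summable_sdist x)
  have hdiff : takagi (x+h) - takagi x = ∑' n, F n := by
    rw [takagi_eq_sum hxh.1.le hxh.2.le, takagi_eq_sum hx.1.le hx.2.le]
    exact (Summable.tsum_sub (summable_sdist (x+h)) (summable_sdist x)).symm
  have hsplit := Summable.sum_add_tsum_nat_add m hFs
  -- tail bound
  have hFb : ∀ k : ℕ, |F k| ≤ (1/2:ℝ)^(k+1) := by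
    intro k
    have h1 : |sdist (2^k*(x+h)) - sdist (2^k*x)| ≤ 1/2 := by
      rw [abs_sub_le_iff]
      constructor
      · linarith [sdist_le_half (2^k*(x+h)), sdist_nonneg (2^k*x)]
      · linarith [sdist_le_half (2^k*x), sdist_nonneg (2^k*(x+h))]
    have : F k = (sdist (2^k*(x+h)) - sdist (2^k*x))/2^k := by rw [hF]; ring
    rw [this, abs_div, abs_of_pos (show (0:ℝ) < 2^k by positivity)]
    rw [div_le_iff₀ (by positivity)]
    calc |sdist (2^k*(x+h)) - sdist (2^k*x)| ≤ 1/2 := h1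
    _ ≤ (1/2:ℝ)^(k+1) * 2^k := by
        rw [pow_succ, mul_comm ((1/2:ℝ)^k) _, mul_assoc]
        have : (1/2:ℝ)^k * 2^k = 1 := by rw [← mul_pow]; norm_num
        rw [this, mul_one]
  have hgs : Summable (fun n : ℕ => (1/2:ℝ)^(n+m+1)) := by
    have hgeo : Summable (fun n : ℕ => (1/2:ℝ)^n) :=
      summable_geometric_of_lt_one (by norm_num) (by norm_num)
    refine Summable.of_nonneg_of_le (fun n => by positivity) (fun n => ?_) hgeo
    exact pow_le_pow_of_le_one (by norm_num) (by norm_num) (by omega)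
  have habsum : Summable (fun n : ℕ => |F (n+m)|) := by
    refine Summable.of_nonneg_of_le (fun n => abs_nonneg _) (fun n => ?_) hgs
    exact hFb (n+m)
  have htail : |∑' n, F (n+m)| ≤ (1/2:ℝ)^m := by
    have h1 : |∑' n, F (n+m)| ≤ ∑' n : ℕ, |F (n+m)| := by
      simpa [Real.norm_eq_abs] using
        norm_tsum_le_tsum_norm (f := fun n : ℕ => F (n+m)) (by simpa [Real.norm_eq_abs] using habsum)
    have h2 : ∑' n : ℕ, |F (n+m)| ≤ ∑' n : ℕ, (1/2:ℝ)^(n+m+1) :=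
      Summable.tsum_le_tsum (fun n => hFb (n+m)) habsum hgs
    have h3 : ∑' n : ℕ, (1/2:ℝ)^(n+m+1) = (1/2:ℝ)^m := by
      calc ∑' n : ℕ, (1/2:ℝ)^(n+m+1) = ∑' n : ℕ, (1/2:ℝ)^(n+(m+1)) := by
            apply tsum_congr
            intro n
            rw [show n+m+1 = n+(m+1) from by omega]
      _ = (1/2:ℝ)^(m+1) * 2 := geom_shift (m+1)
      _ = (1/2:ℝ)^m := by rw [pow_succ]; ring
    linarith
  have htailq : -2 ≤ (∑' n, F (n+m)) / h := by
    have h1 : |(∑' n, F (n+m)) / h| ≤ 2 := by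
      rw [abs_div]
      rw [div_le_iff₀ habs0]
      have : (1/2:ℝ)^m ≤ 2 * |h| := by
        have : (1/2:ℝ)^m = 2 * (1/2:ℝ)^(m+1) := by rw [pow_succ]; ring
        linarith
      linarith
    linarith [neg_abs_le ((∑' n, F (n+m)) / h)]
  -- bad set
  set B : Finset ℕ := (Finset.range m).filter
    (fun n => (¬ ∃ j, a j = n + 1) ∧ ⌊(2:ℝ)^(n+1)*(x+h)⌋ ≠ ⌊(2:ℝ)^(n+1)*x⌋) with hB
  -- pointwise estimate
  have key : ∀ n ∈ Finset.range m,
      (if ∃ j, a j = n + 1 then (-1:ℝ) else 1) - (if n ∈ B then (2:ℝ) else 0) ≤ F n / h := by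
    intro n hn
    have hFq : F n / h = (sdist (2^n*(x+h)) - sdist (2^n*x)) / (2^n * h) := by
      rw [hF]
      field_simp
    have hlip : |sdist (2^n*(x+h)) - sdist (2^n*x)| ≤ 2^n * |h| := by
      have := sdist_lipschitz (2^n*(x+h)) (2^n*x)
      have he : (2:ℝ)^n*(x+h) - 2^n*x = 2^n * h := by ring
      rw [he] at this
      calc |sdist (2^n*(x+h)) - sdist (2^n*x)| ≤ |2^n * h| := this
      _ = 2^n * |h| := by rw [abs_mul, abs_of_pos (show (0:ℝ) < 2^n by positivity)]
    have habs1 : |F n / h| ≤ 1 := by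
      rw [hFq, abs_div]
      rw [div_le_one (by positivity : (0:ℝ) < |2^n * h|)]
      calc |sdist (2^n*(x+h)) - sdist (2^n*x)| ≤ 2^n * |h| := hlip
      _ = |2^n * h| := by rw [abs_mul, abs_of_pos (show (0:ℝ) < 2^n by positivity)]
    have hge1 : (-1:ℝ) ≤ F n / h := by linarith [neg_abs_le (F n / h)]
    by_cases hd : ∃ j, a j = n + 1
    · rw [if_pos hd]
      split_ifs with hBm <;> linarith
    · rw [if_neg hd]
      by_cases hBm : n ∈ B
      · rw [if_pos hBm]; linarith
      · rw [if_neg hBm]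
        have hfl : ⌊(2:ℝ)^(n+1)*(x+h)⌋ = ⌊(2:ℝ)^(n+1)*x⌋ := by
          by_contra hne
          exact hBm (by rw [hB]; exact Finset.mem_filter.mpr ⟨hn, hd, hne⟩)
        -- digit is 0, slope +1
        have hfr : Int.fract ((2:ℝ)^n * x) < 1/2 := (digit_iff hnd ha ha1 hxa n).mp hd
        have h2x : (2:ℝ)^(n+1)*x = 2*((2:ℝ)^n*x) := by rw [pow_succ]; ring
        have h2xh : (2:ℝ)^(n+1)*(x+h) = 2*((2:ℝ)^n*(x+h)) := by rw [pow_succ]; ring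
        have heven : Even ⌊2*((2:ℝ)^n*x)⌋ := (even_floor_two_mul_iff _).mpr hfr
        obtain ⟨l, hl⟩ := heven
        have hfl2 : ⌊2*((2:ℝ)^n*(x+h))⌋ = l + l := by rw [← h2xh, hfl, h2x, hl]
        have hb1 : ((l:ℝ) + l) ≤ 2*((2:ℝ)^n*x) := by
          have := Int.floor_le (2*((2:ℝ)^n*x))
          rw [hl] at this
          push_cast at this
          linarith
        have hb2 : 2*((2:ℝ)^n*x) < l + l + 1 := by
          have := Int.lt_floor_add_one (2*((2:ℝ)^n*x))
          rw [hl] at this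
          push_cast at this
          linarith
        have hb3 : ((l:ℝ) + l) ≤ 2*((2:ℝ)^n*(x+h)) := by
          have := Int.floor_le (2*((2:ℝ)^n*(x+h)))
          rw [hfl2] at this
          push_cast at this
          linarith
        have hb4 : 2*((2:ℝ)^n*(x+h)) < l + l + 1 := by
          have := Int.lt_floor_add_one (2*((2:ℝ)^n*(x+h)))
          rw [hfl2] at this
          push_cast at this
          linarith
        have hs1 : sdist ((2:ℝ)^n*x) = (2:ℝ)^n*x - l :=
          sdist_eq_left (by linarith) (by linarith)
        have hs2 : sdist ((2:ℝ)^n*(x+h)) = (2:ℝ)^n*(x+h) - l :=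
          sdist_eq_left (by linarith) (by linarith)
        have : F n / h = 1 := by
          rw [hFq, hs1, hs2]
          have hne : (2:ℝ)^n * h ≠ 0 := by
            apply mul_ne_zero (by positivity) hh
          field_simp
          ring
        rw [this]
        norm_num
  -- counting the bad set
  have hcard : (B.card : ℝ) ≤ M + 1 := by
    have hBsub : B ⊆ Finset.range m := Finset.filter_subset _ _
    -- dyadic-point consequence lemmas
    have hCpos : 0 < h → ∀ n ∈ B, ∀ r : ℕ, n + 1 ≤ r → r + 1 ≤ m → (∃ j, a j = r + 1) := by
      intro hpos n hnB r hr1 hr2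
      obtain ⟨hnr, hd, hne⟩ := Finset.mem_filter.mp hnB
      have hmono : ⌊(2:ℝ)^(n+1)*x⌋ ≤ ⌊(2:ℝ)^(n+1)*(x+h)⌋ :=
        Int.floor_le_floor (by nlinarith [pow_pos (show (0:ℝ) < 2 by norm_num) (n+1)])
      set K : ℤ := ⌊(2:ℝ)^(n+1)*(x+h)⌋ with hK
      have hK1 : (K:ℝ) ≤ (2:ℝ)^(n+1)*(x+h) := Int.floor_le _
      have hK2 : (2:ℝ)^(n+1)*x < K := by
        have hlt : ⌊(2:ℝ)^(n+1)*x⌋ + 1 ≤ K := by omega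
        have := Int.lt_floor_add_one ((2:ℝ)^(n+1)*x)
        calc (2:ℝ)^(n+1)*x < ⌊(2:ℝ)^(n+1)*x⌋ + 1 := this
        _ ≤ (K:ℝ) := by exact_mod_cast hlt
      set d : ℝ := (K:ℝ)/2^(n+1) with hd'
      have hp1 : (0:ℝ) < 2^(n+1) := by positivity
      have hdx : x < d := by rw [hd', lt_div_iff₀ hp1]; linarith
      have hdxh : d ≤ x + h := by rw [hd', div_le_iff₀ hp1]; linarith
      set t : ℝ := 2^r * (d - x) with ht'
      have ht0 : 0 < t := by
        apply mul_pos (by positivity)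
        linarith
      have hthalf : t < 1/2 := by
        have h1 : d - x ≤ h := by linarith
        have h2 : t ≤ 2^r * h := by
          rw [ht']
          apply mul_le_mul_of_nonneg_left h1 (by positivity)
        have h3 : (2:ℝ)^r ≤ 2^(m-1) := by
          apply pow_le_pow_right₀ (by norm_num)
          omega
        have h4 : h < (1/2)^m := by
          have := abs_of_pos hpos
          rw [this] at hm1
          exact hm1
        have h5 : (2:ℝ)^r * h ≤ 2^(m-1) * h := by
          apply mul_le_mul_of_nonneg_right h3 (le_of_lt hpos)
        have h6 : (2:ℝ)^(m-1) * h < 2^(m-1) * (1/2)^m := by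
          apply mul_lt_mul_of_pos_left h4 (by positivity)
        have h7 : (2:ℝ)^(m-1) * (1/2)^m = 1/2 := by
          rw [two_pow_mul_gt (by omega : m - 1 < m)]
          have : m - (m-1) = 1 := by omega
          rw [this]
          norm_num
        linarith
      -- fract computation
      have hrd : (2:ℝ)^r * d = ((K * 2^(r - (n+1)) : ℤ):ℝ) := by
        rw [hd']
        have : (2:ℝ)^r = 2^(r-(n+1)) * 2^(n+1) := by rw [← pow_add]; congr 1; omega
        rw [this]
        push_cast
        field_simp
      have hxr : (2:ℝ)^r * x = ((K * 2^(r - (n+1)) : ℤ):ℝ) + (-t) := by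
        rw [← hrd, ht']
        ring
      have hfr : Int.fract ((2:ℝ)^r * x) = 1 - t := by
        rw [hxr, Int.fract_intCast_add]
        rw [Int.fract_neg]
        · rw [Int.fract_eq_self.mpr ⟨le_of_lt ht0, by linarith⟩]
        · rw [Int.fract_eq_self.mpr ⟨le_of_lt ht0, by linarith⟩]
          linarith
      by_contra hcon
      have := (digit_iff hnd ha ha1 hxa r).mp hcon
      rw [hfr] at this
      linarith
    have hCneg : h < 0 → ∀ n ∈ B, ∀ r : ℕ, n + 1 ≤ r → r + 1 ≤ m → ¬(∃ j, a j = r + 1) := by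
      intro hneg n hnB r hr1 hr2
      obtain ⟨hnr, hd, hne⟩ := Finset.mem_filter.mp hnB
      have hmono : ⌊(2:ℝ)^(n+1)*(x+h)⌋ ≤ ⌊(2:ℝ)^(n+1)*x⌋ :=
        Int.floor_le_floor (by nlinarith [pow_pos (show (0:ℝ) < 2 by norm_num) (n+1)])
      set K : ℤ := ⌊(2:ℝ)^(n+1)*x⌋ with hK
      have hK1 : (K:ℝ) ≤ (2:ℝ)^(n+1)*x := Int.floor_le _
      have hK2 : (2:ℝ)^(n+1)*(x+h) < K := by
        have hlt : ⌊(2:ℝ)^(n+1)*(x+h)⌋ + 1 ≤ K := by omega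
        have := Int.lt_floor_add_one ((2:ℝ)^(n+1)*(x+h))
        calc (2:ℝ)^(n+1)*(x+h) < ⌊(2:ℝ)^(n+1)*(x+h)⌋ + 1 := this
        _ ≤ (K:ℝ) := by exact_mod_cast hlt
      set d : ℝ := (K:ℝ)/2^(n+1) with hd'
      have hp1 : (0:ℝ) < 2^(n+1) := by positivity
      have hdx : d ≤ x := by rw [hd', div_le_iff₀ hp1]; linarith
      have hdxh : x + h < d := by rw [hd', lt_div_iff₀ hp1]; linarith
      set t : ℝ := 2^r * (x - d) with ht'
      have ht0 : 0 ≤ t := by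
        apply mul_nonneg (by positivity)
        linarith
      have hthalf : t < 1/2 := by
        have h1 : x - d < -h := by linarith
        have h2 : t < 2^r * (-h) := by
          rw [ht']
          apply mul_lt_mul_of_pos_left h1 (by positivity)
        have h3 : (2:ℝ)^r ≤ 2^(m-1) := by
          apply pow_le_pow_right₀ (by norm_num)
          omega
        have h4 : -h < (1/2)^m := by
          have := abs_of_neg hneg
          rw [this] at hm1
          exact hm1
        have h5 : (2:ℝ)^r * (-h) ≤ 2^(m-1) * (-h) := by
          apply mul_le_mul_of_nonneg_right h3 (by linarith)
        have h6 : (2:ℝ)^(m-1) * (-h) < 2^(m-1) * (1/2)^m := by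
          apply mul_lt_mul_of_pos_left h4 (by positivity)
        have h7 : (2:ℝ)^(m-1) * (1/2)^m = 1/2 := by
          rw [two_pow_mul_gt (by omega : m - 1 < m)]
          have : m - (m-1) = 1 := by omega
          rw [this]
          norm_num
        linarith
      have hrd : (2:ℝ)^r * d = ((K * 2^(r - (n+1)) : ℤ):ℝ) := by
        rw [hd']
        have : (2:ℝ)^r = 2^(r-(n+1)) * 2^(n+1) := by rw [← pow_add]; congr 1; omega
        rw [this]
        push_cast
        field_simp
      have hxr : (2:ℝ)^r * x = ((K * 2^(r - (n+1)) : ℤ):ℝ) + t := by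
        rw [← hrd, ht']
        ring
      have hfr : Int.fract ((2:ℝ)^r * x) = t := by
        rw [hxr, Int.fract_intCast_add]
        exact Int.fract_eq_self.mpr ⟨ht0, by linarith⟩
      apply (digit_iff hnd ha ha1 hxa r).mpr
      rw [hfr]
      linarith
    rcases hh.lt_or_gt with hneg | hpos
    · -- h < 0 : bounded zero runs give the bound
      by_cases hBe : B.Nonempty
      · set n₀ := B.min' hBe with hn₀
        have hn₀B : n₀ ∈ B := B.min'_mem hBe
        obtain ⟨hn₀r, hn₀d, hn₀ne⟩ := Finset.mem_filter.mp hn₀B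
        rw [Finset.mem_range] at hn₀r
        have hzero : ∀ r : ℕ, n₀ + 1 ≤ r → r ≤ m → ¬ ∃ j, a j = r := by
          intro r hr1 hr2
          rcases Nat.eq_or_lt_of_le hr1 with heq | hlt
          · rw [← heq]; exact hn₀d
          · have : r - 1 + 1 = r := by omega
            have h2 := hCneg hneg n₀ hn₀B (r-1) (by omega) (by omega)
            rw [this] at h2
            exact h2
        have ha0 : a 0 ≤ n₀ := by
          by_contra hcon
          push_neg at hcon
          exact hzero (a 0) (by omega) (by omega) ⟨0, rfl⟩
        have hrun : m + 1 ≤ (n₀ + 1) + M :=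
          zero_run_bound ha ha1 hM (by omega) (fun r h1 h2 => hzero r h1 h2)
        have hsub2 : B ⊆ Finset.Ico n₀ m := by
          intro b hb
          rw [Finset.mem_Ico]
          exact ⟨B.min'_le b hb, Finset.mem_range.mp (hBsub hb)⟩
        have hc1 : B.card ≤ m - n₀ := by
          have := Finset.card_le_card hsub2
          rwa [Nat.card_Ico] at this
        have : B.card ≤ M := by omega
        have : (B.card : ℝ) ≤ M := by exact_mod_cast this
        linarith
      · rw [Finset.not_nonempty_iff_eq_empty] at hBe
        rw [hBe]
        simp
        positivity
    · -- h > 0 : at most one bad index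
      have hc1 : B.card ≤ 1 := by
        rw [Finset.card_le_one]
        intro n1 h1 n2 h2
        by_contra hne12
        rcases Nat.lt_or_ge n1 n2 with hlt | hge
        · have hr2 : n2 + 1 ≤ m := Finset.mem_range.mp (hBsub h2)
          have := hCpos hpos n1 h1 n2 (by omega) hr2
          obtain ⟨_, hd2, _⟩ := Finset.mem_filter.mp h2
          exact hd2 this
        · have hlt2 : n2 < n1 := by omega
          have hr1 : n1 + 1 ≤ m := Finset.mem_range.mp (hBsub h1)
          have := hCpos hpos n2 h2 n1 (by omega) hr1
          obtain ⟨_, hd1, _⟩ := Finset.mem_filter.mp h1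
          exact hd1 this
      have : (B.card : ℝ) ≤ 1 := by exact_mod_cast hc1
      linarith
  -- assemble
  have hsum1 : ∑ n ∈ Finset.range m,
      ((if ∃ j, a j = n + 1 then (-1:ℝ) else 1) - (if n ∈ B then (2:ℝ) else 0))
      ≤ ∑ n ∈ Finset.range m, F n / h := Finset.sum_le_sum key
  have hsum2 : ∑ n ∈ Finset.range m, (if n ∈ B then (2:ℝ) else 0) = 2 * B.card := by
    rw [Finset.sum_ite_mem]
    rw [Finset.inter_eq_right.mpr (Finset.filter_subset _ _)]
    rw [Finset.sum_const, nsmul_eq_mul, mul_comm]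
  have hsum3 : ∑ n ∈ Finset.range m,
      ((if ∃ j, a j = n + 1 then (-1:ℝ) else 1) - (if n ∈ B then (2:ℝ) else 0))
      = ((m:ℝ) - 2 * (Jn a m)) - 2 * B.card := by
    rw [Finset.sum_sub_distrib, hsum2, Dsum_eq ha ha1]
  have hsum4 : ∑ n ∈ Finset.range m, F n / h = (∑ n ∈ Finset.range m, F n) / h := by
    rw [Finset.sum_div]
  have hmain : ((m:ℝ) - 2 * (Jn a m)) - 2 * ((M:ℝ)+1) ≤ (∑ n ∈ Finset.range m, F n) / h := by
    rw [← hsum4]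
    calc ((m:ℝ) - 2 * (Jn a m)) - 2 * ((M:ℝ)+1)
        ≤ ((m:ℝ) - 2 * (Jn a m)) - 2 * B.card := by linarith
    _ ≤ _ := by rw [← hsum3]; exact hsum1
  have hfinal : (takagi (x+h) - takagi x) / h
      = (∑ n ∈ Finset.range m, F n) / h + (∑' n, F (n+m)) / h := by
    rw [hdiff, ← hsplit, add_div]
  rw [hfinal]
  linarith [hmain, htailq]

end Core
theorem takagi_deriv_top_of_bounded_zero_runs
    (x : ℝ) (hx : x ∈ Set.Ioo (0:ℝ) 1) (hnd : ¬ IsDyadic x)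
    (a : ℕ → ℕ) (ha : StrictMono a) (ha1 : 1 ≤ a 0)
    (hxa : x = ∑' n : ℕ, (1/2 : ℝ)^(a n))
    (hD : Tendsto (fun n : ℕ => (a n : ℝ) - 2 * (n + 1)) atTop atTop)
    (M : ℕ) (hM : ∀ n, a (n+1) - a n ≤ M + 1) :
    Tendsto (fun h => (takagi (x + h) - takagi x) / h) (𝓝[≠] (0:ℝ)) atTop := by
  rw [tendsto_atTop]
  intro b
  obtain ⟨Nb, hNb⟩ := Filter.eventually_atTop.mp (hD.eventually_ge_atTop (b + (2*M+4)))
  have hDge : ∀ m : ℕ, a Nb ≤ m → b + (2*(M:ℝ)+4) ≤ (m:ℝ) - 2 * (Jn a m) := by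
    intro m hm
    have hJ : Nb < Jn a m := (Jn_iff ha ha1).mpr hm
    set j := Jn a m - 1 with hj
    have hj1 : j + 1 = Jn a m := by omega
    have hjNb : Nb ≤ j := by omega
    have haj : a j ≤ m := Jn_min (by omega)
    have h1 := hNb j hjNb
    have hc : ((Jn a m : ℕ):ℝ) = (j:ℝ) + 1 := by
      rw [← hj1]; push_cast; ring
    have h2 : (a j : ℝ) ≤ (m:ℝ) := by exact_mod_cast haj
    rw [hc]
    push_cast at h1 ⊢
    linarith
  have hx0 : 0 < x := hx.1
  have hx1 : x < 1 := hx.2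
  set δ := min ((1/2:ℝ)^(a Nb + 1)) (min x (1-x)) with hδ
  have hδ0 : 0 < δ := by
    apply lt_min (by positivity)
    apply lt_min hx0
    linarith
  have hball : ∀ᶠ (t : ℝ) in 𝓝[≠] (0:ℝ), |t| < δ := by
    apply eventually_nhdsWithin_of_eventually_nhds
    have hb := Metric.ball_mem_nhds (0:ℝ) hδ0
    filter_upwards [hb] with t ht
    simpa [Real.dist_eq] using ht
  filter_upwards [hball, self_mem_nhdsWithin] with t ht htne
  rw [Set.mem_compl_singleton_iff] at htne
  have habs : 0 < |t| := abs_pos.2 htne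
  have hexk : ∃ k : ℕ, (1/2:ℝ)^k ≤ |t| := by
    obtain ⟨k, hk⟩ := exists_pow_lt_of_lt_one habs (show (1/2:ℝ) < 1 by norm_num)
    exact ⟨k, hk.le⟩
  set k₀ := Nat.find hexk with hk₀def
  have hk₀ : (1/2:ℝ)^k₀ ≤ |t| := Nat.find_spec hexk
  have htδ1 : |t| < (1/2:ℝ)^(a Nb + 1) := lt_of_lt_of_le ht (min_le_left _ _)
  have hk0large : a Nb + 2 ≤ k₀ := by
    by_contra hcon
    push_neg at hcon
    have hle : (1/2:ℝ)^(a Nb + 1) ≤ (1/2:ℝ)^k₀ :=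
      pow_le_pow_of_le_one (by norm_num) (by norm_num) (by omega)
    linarith
  set m := k₀ - 1 with hm
  have hm1' : m + 1 = k₀ := by omega
  have hm2 : (1/2:ℝ)^(m+1) ≤ |t| := by rw [hm1']; exact hk₀
  have hm1 : |t| < (1/2:ℝ)^m := by
    have := Nat.find_min hexk (show m < k₀ by omega)
    push_neg at this
    exact this
  have hm0 : a 0 ≤ m := by
    have := ha.monotone (Nat.zero_le Nb)
    omega
  have hmNb : a Nb ≤ m := by omega
  have htmin : |t| < min x (1-x) := lt_of_lt_of_le ht (min_le_right _ _)
  have hxh : x + t ∈ Set.Ioo (0:ℝ) 1 := by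
    have h1 := abs_lt.mp (lt_of_lt_of_le htmin (min_le_left _ _))
    have h2 := abs_lt.mp (lt_of_lt_of_le htmin (min_le_right _ _))
    constructor <;> [linarith; linarith]
  have hcore := core_estimate x hx hnd a ha ha1 hxa M hM t htne hxh m hm0 hm1 hm2
  have hD2 := hDge m hmNb
  push_cast at hcore
  linarith
end

section
/- Let (a_n) be a strictly increasing sequence of positive integers with limsup_{n→∞} a_{n+1}/a_n > 2. Then the sequence a_{n+1} - 2a_n + 2n - log₂(a_{n+1} - a_n) does not tend to -∞; in fact, it is ≥ 2n - C infinitely often for some constant C. -/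
open Filter Topology Set

theorem cond_fails_of_limsup_ratio_gt_two
    (a : ℕ → ℕ) (ha : StrictMono a) (ha1 : 1 ≤ a 0)
    (hsup : 2 < Filter.limsup (fun n : ℕ => (a (n+1) : ℝ) / (a n : ℝ)) atTop) :
    ¬ Tendsto (fun n : ℕ =>
        (a (n+1) : ℝ) - 2 * (a n : ℝ) + 2 * (n + 1)
          - Real.logb 2 ((a (n+1) : ℝ) - (a n : ℝ))) atTop atBot ∧
    ∃ C : ℝ, ∃ᶠ n : ℕ in atTop,
      2 * ((n : ℝ) + 1) - C ≤
        (a (n+1) : ℝ) - 2 * (a n : ℝ) + 2 * (n + 1)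
          - Real.logb 2 ((a (n+1) : ℝ) - (a n : ℝ)) := by
  set f : ℕ → ℝ := fun n : ℕ =>
        (a (n+1) : ℝ) - 2 * (a n : ℝ) + 2 * (n + 1)
          - Real.logb 2 ((a (n+1) : ℝ) - (a n : ℝ)) with hf
  have hapos : ∀ n, 0 < a n := fun n => lt_of_lt_of_le ha1 (ha.monotone (Nat.zero_le n))
  have haposR : ∀ n, (0:ℝ) < (a n : ℝ) := fun n => by exact_mod_cast hapos n
  have ha1R : ∀ n, (1:ℝ) ≤ (a n : ℝ) := fun n => by exact_mod_cast hapos n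
  -- pick ε
  set L := Filter.limsup (fun n : ℕ => (a (n+1) : ℝ) / (a n : ℝ)) atTop with hL
  set ε : ℝ := (L - 2) / 2 with hε
  have hεpos : 0 < ε := by simp [hε]; linarith
  have hcb : IsCoboundedUnder (· ≤ ·) atTop (fun n : ℕ => (a (n+1) : ℝ) / (a n : ℝ)) :=
    isCoboundedUnder_le_of_le atTop (x := 0)
      (fun n => div_nonneg (Nat.cast_nonneg _) (Nat.cast_nonneg _))
  have hfreq : ∃ᶠ n in atTop, 2 + ε < (a (n+1) : ℝ) / (a n : ℝ) := by
    apply frequently_lt_of_lt_limsup hcb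
    rw [← hL]; simp [hε]; linarith
  set C : ℝ := Real.logb 2 (1 + 1/ε) with hC
  have key : ∀ n : ℕ, 2 + ε < (a (n+1) : ℝ) / (a n : ℝ) →
      2 * ((n : ℝ) + 1) - C ≤ f n := by
    intro n hn
    have hA := haposR n
    have hB : (2 + ε) * (a n : ℝ) < (a (n+1) : ℝ) := by
      rwa [lt_div_iff₀ hA] at hn
    set d : ℝ := (a (n+1) : ℝ) - 2 * (a n : ℝ) with hd
    have hdε : ε * (a n : ℝ) < d := by simp [hd]; nlinarith
    have hdpos : 0 < d := lt_trans (by positivity) hdε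
    -- d is a positive integer, hence ≥ 1
    have hd1 : (1:ℝ) ≤ d := by
      have hz : (0:ℤ) < (a (n+1) : ℤ) - 2 * (a n : ℤ) := by
        have : ((a (n+1) : ℤ) - 2 * (a n : ℤ) : ℝ) = d := by push_cast [hd]; ring
        exact_mod_cast (this ▸ hdpos)
      have h1 : (1:ℤ) ≤ (a (n+1) : ℤ) - 2 * (a n : ℤ) := hz
      have : ((1:ℤ) : ℝ) ≤ (((a (n+1) : ℤ) - 2 * (a n : ℤ)) : ℝ) := by exact_mod_cast h1
      simpa [hd] using by push_cast at this ⊢; linarith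
    -- logb 2 d ≤ d since d is an integer ≥ 1 and d < 2^d
    have hlogd : Real.logb 2 d ≤ d := by
      set m : ℕ := a (n+1) - 2 * a n with hm
      have hmn : 2 * a n ≤ a (n+1) := by
        by_contra h
        push_neg at h
        have h' : (a (n+1) : ℝ) < 2 * (a n : ℝ) := by exact_mod_cast h
        have hdneg : d < 0 := by rw [hd]; linarith
        linarith
      have hmd : (m : ℝ) = d := by
        rw [hm, hd]; push_cast [hmn]; ring
      rw [Real.logb_le_iff_le_rpow (by norm_num) hdpos]
      rw [← hmd]
      calc (m : ℝ) ≤ ((2 ^ m : ℕ) : ℝ) := by exact_mod_cast (Nat.lt_two_pow_self (n := m)).le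
        _ = (2:ℝ) ^ (m : ℝ) := by rw [Real.rpow_natCast]; push_cast; ring
    -- a(n+1) - a n = d + a n ≤ d (1 + 1/ε)
    have hAle : (a n : ℝ) ≤ d / ε := by
      rw [le_div_iff₀ hεpos]; nlinarith
    have hdiff : (a (n+1) : ℝ) - (a n : ℝ) = d + (a n : ℝ) := by rw [hd]; ring
    have hdiffpos : 0 < (a (n+1) : ℝ) - (a n : ℝ) := by rw [hdiff]; positivity
    have hub : (a (n+1) : ℝ) - (a n : ℝ) ≤ d * (1 + 1/ε) := by
      rw [hdiff]
      have : d / ε = d * (1/ε) := by ring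
      nlinarith [hAle]
    have hlog : Real.logb 2 ((a (n+1) : ℝ) - (a n : ℝ)) ≤ d + C := by
      calc Real.logb 2 ((a (n+1) : ℝ) - (a n : ℝ))
          ≤ Real.logb 2 (d * (1 + 1/ε)) :=
            Real.logb_le_logb_of_le (by norm_num) hdiffpos hub
        _ = Real.logb 2 d + Real.logb 2 (1 + 1/ε) := by
            rw [Real.logb_mul (ne_of_gt hdpos) (by positivity)]
        _ ≤ d + C := by rw [hC]; linarith
    simp only [hf, ← hd]
    linarith
  have hfreq2 : ∃ᶠ n : ℕ in atTop, 2 * ((n : ℝ) + 1) - C ≤ f n :=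
    hfreq.mono fun n hn => key n hn
  constructor
  · intro htend
    have hev : ∀ᶠ n in atTop, f n ≤ -C := htend.eventually (eventually_le_atBot (-C))
    obtain ⟨n, h1, h2⟩ := (hfreq2.and_eventually hev).exists
    have hn0 : (0:ℝ) ≤ (n:ℝ) := Nat.cast_nonneg n
    linarith
  · exact ⟨C, hfreq2⟩
end

section
/- Let (a_n) be a strictly increasing sequence of positive integers such that for some 0 < ε ≤ 1, limsup_{n→∞} a_{n+1}/a_n = 2 - ε and liminf_{n→∞} a_n/n > 2/ε. Then a_{n+1} - 2a_n + 2n - log₂(a_{n+1} - a_n) → -∞ as n → ∞. -/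
open Filter Topology Set

theorem cond_of_limsup_liminf
    (a : ℕ → ℕ) (ha : StrictMono a) (ha1 : 1 ≤ a 0)
    (ε : ℝ) (hε0 : 0 < ε) (hε1 : ε ≤ 1)
    (hsup : Filter.limsup (fun n : ℕ => (a (n+1) : ℝ) / (a n : ℝ)) atTop = 2 - ε)
    (hinf : 2 / ε < Filter.liminf (fun n : ℕ => (a n : ℝ) / ((n : ℝ) + 1)) atTop) :
    Tendsto (fun n : ℕ =>
        (a (n+1) : ℝ) - 2 * (a n : ℝ) + 2 * (n + 1)
          - Real.logb 2 ((a (n+1) : ℝ) - (a n : ℝ))) atTop atBot := by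
  have hapos : ∀ n, 1 ≤ (a n : ℝ) := by
    intro n
    exact_mod_cast le_trans ha1 (ha.monotone (Nat.zero_le n))
  have hsucc : ∀ n, (a n : ℝ) + 1 ≤ (a (n+1) : ℝ) := by
    intro n
    have := ha (Nat.lt_succ_self n)
    exact_mod_cast this
  -- u is bounded above (else limsup = 0, contradiction)
  have hB : IsBoundedUnder (· ≤ ·) atTop (fun n : ℕ => (a (n+1) : ℝ) / (a n : ℝ)) := by
    by_contra h
    have hempty : { x : ℝ | ∀ᶠ n in atTop, (a (n+1) : ℝ) / (a n : ℝ) ≤ x } = ∅ := by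
      rw [Set.eq_empty_iff_forall_notMem]
      intro x hx
      exact h ⟨x, hx⟩
    rw [limsup_eq, hempty, Real.sInf_empty] at hsup
    linarith
  -- v is bounded below by 0
  have hC : IsBoundedUnder (· ≥ ·) atTop (fun n : ℕ => (a n : ℝ) / ((n : ℝ) + 1)) := by
    refine ⟨0, eventually_map.2 (Eventually.of_forall fun n => ?_)⟩
    show (a n : ℝ) / ((n : ℝ) + 1) ≥ 0
    positivity
  set L := Filter.liminf (fun n : ℕ => (a n : ℝ) / ((n : ℝ) + 1)) atTop with hL
  set c := (2 / ε + L) / 2 with hcdef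
  have hεinv : 0 < 2 / ε := by positivity
  have hc1 : 2 / ε < c := by rw [hcdef]; linarith
  have hc0 : 0 < c := lt_trans hεinv hc1
  have hcL : c < L := by rw [hcdef]; linarith
  have h2c : 2 / c < ε := by
    rw [div_lt_iff₀ hc0]
    have := (div_lt_iff₀ hε0).mp hc1
    linarith [mul_comm ε c]
  set δ := (ε - 2 / c) / 2 with hδdef
  have hδ0 : 0 < δ := by rw [hδdef]; linarith
  have hc2 : 0 < 2 / c := by positivity
  have hδε : δ < ε := by rw [hδdef]; linarith
  have hev1 : ∀ᶠ n : ℕ in atTop, c < (a n : ℝ) / ((n : ℝ) + 1) :=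
    eventually_lt_of_lt_liminf (by rw [← hL]; exact hcL) hC
  have hev2 : ∀ᶠ n : ℕ in atTop, (a (n+1) : ℝ) / (a n : ℝ) < 2 - ε + δ :=
    eventually_lt_of_limsup_lt (by rw [hsup]; linarith) hB
  set K := (ε - δ) * c - 2 with hKdef
  have hK0 : 0 < K := by
    rw [hKdef, hδdef]
    have h1 : 2 < ε * c := by
      have := (div_lt_iff₀ hc0).mp h2c
      linarith [mul_comm c ε]
    have h2 : (2 / c) * c = 2 := div_mul_cancel₀ 2 (ne_of_gt hc0)
    nlinarith
  have hbound : ∀ᶠ n : ℕ in atTop,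
      (a (n+1) : ℝ) - 2 * (a n : ℝ) + 2 * (n + 1)
          - Real.logb 2 ((a (n+1) : ℝ) - (a n : ℝ)) ≤ -K * ((n : ℝ) + 1) := by
    filter_upwards [hev1, hev2] with n h1 h2
    have hn1 : (0:ℝ) < (n : ℝ) + 1 := by positivity
    have han : 0 < (a n : ℝ) := lt_of_lt_of_le one_pos (hapos n)
    have hA : c * ((n : ℝ) + 1) < (a n : ℝ) := by
      rw [lt_div_iff₀ hn1] at h1
      linarith [mul_comm ((n:ℝ)+1) c]
    have hB2 : (a (n+1) : ℝ) < (2 - ε + δ) * (a n : ℝ) := by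
      rwa [div_lt_iff₀ han] at h2
    have hlog : 0 ≤ Real.logb 2 ((a (n+1) : ℝ) - (a n : ℝ)) := by
      apply Real.logb_nonneg (by norm_num)
      linarith [hsucc n]
    have hmain : (a (n+1) : ℝ) - 2 * (a n : ℝ) + 2 * ((n : ℝ) + 1) ≤ -K * ((n : ℝ) + 1) := by
      have hstep : (δ - ε) * (a n : ℝ) ≤ (δ - ε) * (c * ((n : ℝ) + 1)) := by
        apply mul_le_mul_of_nonpos_left (le_of_lt hA) (by linarith)
      rw [hKdef]
      nlinarith
    push_cast
    linarith
  have htend : Tendsto (fun n : ℕ => -K * ((n : ℝ) + 1)) atTop atBot := by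
    apply Tendsto.const_mul_atTop_of_neg (by linarith : -K < 0)
    exact tendsto_atTop_add_const_right _ 1 tendsto_natCast_atTop_atTop
  exact tendsto_atBot_mono' atTop hbound htend
end

section
/- For a_n = 2^n + ⌈(1+ε)n⌉ with ε > 0 (or a_n = 2^n + (1+ε)n when this is an integer), the quantity a_{n+1} - 2a_n + 2n - log₂(a_{n+1} - a_n) tends to -∞ as n → ∞; whereas for a_n = 2^n + n it does not tend to -∞. -/
open Filter Topology Set

theorem cond_exponential_examples (ε : ℝ) (hε : 0 < ε) :
    (Tendsto (fun n : ℕ =>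
        (fun k : ℕ => ((2:ℝ)^(k+1) + ⌈(1 + ε) * ((k:ℝ) + 1)⌉₊)) (n+1)
          - 2 * (fun k : ℕ => ((2:ℝ)^(k+1) + ⌈(1 + ε) * ((k:ℝ) + 1)⌉₊)) n + 2 * ((n:ℝ) + 1)
          - Real.logb 2 ((fun k : ℕ => ((2:ℝ)^(k+1) + ⌈(1 + ε) * ((k:ℝ) + 1)⌉₊)) (n+1)
            - (fun k : ℕ => ((2:ℝ)^(k+1) + ⌈(1 + ε) * ((k:ℝ) + 1)⌉₊)) n)) atTop atBot) ∧
    ¬ (Tendsto (fun n : ℕ =>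
        ((2:ℝ)^(n+2) + ((n:ℝ) + 2))
          - 2 * ((2:ℝ)^(n+1) + ((n:ℝ) + 1)) + 2 * ((n:ℝ) + 1)
          - Real.logb 2 (((2:ℝ)^(n+2) + ((n:ℝ) + 2))
            - ((2:ℝ)^(n+1) + ((n:ℝ) + 1)))) atTop atBot) := by
  constructor
  · -- Part 1
    set c : ℕ → ℕ := fun k => ⌈(1 + ε) * ((k:ℝ) + 1)⌉₊ with hc
    have key : ∀ n : ℕ,
        ((2:ℝ)^(n+1+1) + c (n+1)) - 2 * ((2:ℝ)^(n+1) + c n) + 2 * ((n:ℝ) + 1)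
          - Real.logb 2 (((2:ℝ)^(n+1+1) + c (n+1)) - ((2:ℝ)^(n+1) + c n))
        ≤ -(ε * n - 2) := by
      intro n
      have hcn : (1 + ε) * ((n:ℝ) + 1) ≤ c n := Nat.le_ceil _
      have hcn1 : (c (n+1) : ℝ) < (1 + ε) * (((n:ℝ)+1) + 1) + 1 := by
        have := Nat.ceil_lt_add_one (a := (1 + ε) * (((n+1:ℕ):ℝ) + 1))
          (by positivity)
        push_cast at this ⊢
        rw [hc]; push_cast; exact this
      have hmono : (c n : ℝ) ≤ c (n+1) := by
        have : c n ≤ c (n+1) := Nat.ceil_le_ceil (by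
          have h : ((n:ℝ)+1) ≤ ((n+1:ℕ):ℝ) + 1 := by push_cast; linarith
          nlinarith)
        exact_mod_cast this
      have harg : (2:ℝ)^(n+1) ≤ ((2:ℝ)^(n+1+1) + c (n+1)) - ((2:ℝ)^(n+1) + c n) := by
        have h2 : (2:ℝ)^(n+1+1) = 2 * (2:ℝ)^(n+1) := by ring
        linarith
      have hlog : ((n:ℝ) + 1) ≤ Real.logb 2 (((2:ℝ)^(n+1+1) + c (n+1)) - ((2:ℝ)^(n+1) + c n)) := by
        have hpos : (0:ℝ) < (2:ℝ)^(n+1) := by positivity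
        have := Real.logb_le_logb_of_le (b := 2) (by norm_num) hpos harg
        rw [Real.logb_pow, Real.logb_self_eq_one (by norm_num), mul_one] at this
        push_cast at this ⊢; linarith
      have h2 : (2:ℝ)^(n+1+1) = 2 * (2:ℝ)^(n+1) := by ring
      push_cast at hcn1
      nlinarith [hlog, hcn, hcn1, h2]
    have htend : Tendsto (fun n : ℕ => -(ε * (n:ℝ) - 2)) atTop atBot := by
      apply Filter.tendsto_neg_atTop_atBot.comp
      exact tendsto_atTop_add_const_right atTop (-2)
        (tendsto_natCast_atTop_atTop.const_mul_atTop hε)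
    exact tendsto_atBot_mono key htend
  · -- Part 2
    intro h
    have h1 := h.eventually_le_atBot (-1)
    rw [Filter.eventually_atTop] at h1
    obtain ⟨N, hN⟩ := h1
    have := hN N le_rfl
    have hnn : (0:ℝ) ≤ ((2:ℝ)^(N+2) + ((N:ℝ) + 2))
          - 2 * ((2:ℝ)^(N+1) + ((N:ℝ) + 1)) + 2 * ((N:ℝ) + 1)
          - Real.logb 2 (((2:ℝ)^(N+2) + ((N:ℝ) + 2)) - ((2:ℝ)^(N+1) + ((N:ℝ) + 1))) := by
      have harg : ((2:ℝ)^(N+2) + ((N:ℝ) + 2)) - ((2:ℝ)^(N+1) + ((N:ℝ) + 1))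
          = (2:ℝ)^(N+1) + 1 := by ring
      have hle : (2:ℝ)^(N+1) + 1 ≤ (2:ℝ)^(N+2) := by
        have h1 : (1:ℝ) ≤ (2:ℝ)^(N+1) := one_le_pow₀ (by norm_num)
        have h2 : (2:ℝ)^(N+2) = 2 * (2:ℝ)^(N+1) := by ring
        linarith
      have hpos : (0:ℝ) < (2:ℝ)^(N+1) + 1 := by positivity
      have hlog : Real.logb 2 ((2:ℝ)^(N+1) + 1) ≤ (N:ℝ) + 2 := by
        have := Real.logb_le_logb_of_le (b := 2) (by norm_num) hpos hle
        rw [Real.logb_pow, Real.logb_self_eq_one (by norm_num), mul_one] at this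
        push_cast at this ⊢; linarith
      rw [harg]
      have h2 : (2:ℝ)^(N+2) = 2 * (2:ℝ)^(N+1) := by ring
      linarith
    linarith
end

section
/- Let x ∈ (0,1) be non-dyadic with binary digits (ε_k) such that d_1(x) := lim_{n→∞} (1/n) Σ_{k=1}^n ε_k exists and 0 < d_1(x) < 1/2. Then T'(x) = +∞, where T is the Takagi function. -/
open Filter Topology Set

/-- The `k`-th binary digit of `x` (for `k ≥ 1`), using the terminating expansion
for dyadic rationals. -/
noncomputable def binDigit (x : ℝ) (k : ℕ) : ℕ := ⌊x * 2^k⌋.toNat % 2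



noncomputable def dZ (y : ℝ) : ℝ := min (Int.fract y) (1 - Int.fract y)

lemma dZ_nonneg (y : ℝ) : 0 ≤ dZ y := by
  have h1 := Int.fract_nonneg y
  have h2 := Int.fract_lt_one y
  unfold dZ
  simp only [le_min_iff]
  constructor <;> linarith

lemma dZ_le_half (y : ℝ) : dZ y ≤ 1/2 := by
  rcases le_total (Int.fract y) (1/2) with h | h
  · exact min_le_of_left_le h
  · exact min_le_of_right_le (by linarith)

lemma dZ_add_int (y : ℝ) (m : ℤ) : dZ (y + m) = dZ y := by
  unfold dZ; rw [Int.fract_add_intCast]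

lemma dZ_neg (y : ℝ) : dZ (-y) = dZ y := by
  unfold dZ
  rcases eq_or_ne (Int.fract y) 0 with h | h
  · rw [Int.fract_neg_eq_zero.2 h, h]
  · rw [Int.fract_neg h]; rw [min_comm]; ring_nf

lemma dZ_left (m : ℤ) (y : ℝ) (h1 : (m:ℝ) ≤ y) (h2 : y ≤ m + 1/2) : dZ y = y - m := by
  have hfl : ⌊y⌋ = m := Int.floor_eq_iff.2 ⟨h1, by push_cast; linarith⟩
  have hf : Int.fract y = y - m := by rw [Int.fract, hfl]
  unfold dZ
  rw [hf, min_eq_left (by linarith)]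

lemma dZ_right (m : ℤ) (y : ℝ) (h1 : (m:ℝ) + 1/2 ≤ y) (h2 : y ≤ m + 1) : dZ y = (m:ℝ) + 1 - y := by
  rcases eq_or_lt_of_le h2 with h | h
  · have hy : y = ((m+1 : ℤ) : ℝ) := by push_cast; linarith
    unfold dZ
    rw [hy, Int.fract_intCast]
    push_cast
    norm_num
  · have hfl : ⌊y⌋ = m := Int.floor_eq_iff.2 ⟨by linarith, by push_cast; linarith⟩
    have hf : Int.fract y = y - m := by rw [Int.fract, hfl]
    unfold dZ
    rw [hf, min_eq_right (by linarith)]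
    ring
lemma tent_eq_dZ {x : ℝ} (hx : x ∈ Icc (0:ℝ) 1) : tent x = 2 * dZ x := by
  obtain ⟨h0, h1⟩ := hx
  rcases eq_or_lt_of_le h1 with h | h
  · have hx1 : x = ((1:ℤ):ℝ) := by rw [h]; norm_num
    unfold tent dZ
    rw [hx1, Int.fract_intCast]
    norm_num
  · have hf : Int.fract x = x := Int.fract_eq_self.2 ⟨h0, h⟩
    unfold tent dZ
    rw [hf]
    rcases le_total x (1-x) with h2 | h2
    · rw [min_eq_left (by linarith), min_eq_left h2]
    · rw [min_eq_right (by linarith), min_eq_right h2]; ring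

lemma tent_iter (n : ℕ) {x : ℝ} (hx : x ∈ Icc (0:ℝ) 1) :
    tent^[n+1] x = 2 * dZ (2^n * x) := by
  induction n generalizing x with
  | zero => simpa using tent_eq_dZ hx
  | succ n ih =>
    have h1 : tent^[n+1+1] x = tent^[n+1] (tent x) := Function.iterate_succ_apply tent (n+1) x
    rw [h1, ih (tent_mem hx)]
    congr 1
    unfold tent
    rcases le_total (2*x) (2-2*x) with h | h
    · rw [min_eq_left h]; ring_nf
    · rw [min_eq_right h]
      have e1 : (2:ℝ)^n * (2 - 2*x) = -(2^(n+1) * x) + ((2^(n+1) : ℤ) : ℝ) := by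
        push_cast; ring
      rw [e1, dZ_add_int, dZ_neg]

lemma summable_dZ (t : ℝ) : Summable (fun k : ℕ => dZ (2^k * t) / 2^k) :=
  Summable.of_nonneg_of_le (fun k => div_nonneg (dZ_nonneg _) (by positivity))
    (fun k => by
      rw [div_le_iff₀ (by positivity)]
      calc dZ (2^k * t) ≤ 1/2 := dZ_le_half _
      _ ≤ 1 := by norm_num
      _ ≤ (1/2:ℝ)^k * 2^k := by rw [← mul_pow]; norm_num)
    (summable_geometric_of_lt_one (by norm_num) (by norm_num))

lemma takagi_eq {x : ℝ} (hx : x ∈ Icc (0:ℝ) 1) :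
    takagi x = ∑' k : ℕ, dZ (2^k * x) / 2^k := by
  unfold takagi
  apply tsum_congr
  intro n
  rw [tent_iter n hx, pow_succ]
  ring

set_option maxHeartbeats 1000000 in
lemma takagi_diff {u v : ℝ} (hu : u ∈ Icc (0:ℝ) 1) (hv : v ∈ Icc (0:ℝ) 1) (n : ℕ) :
    ∃ R : ℝ, takagi v - takagi u
      = (∑ k ∈ Finset.range n, (dZ (2^k * v) - dZ (2^k * u)) / 2^k) + R ∧ |R| ≤ (1/2)^n := by
  have hsum : Summable (fun k : ℕ => (dZ (2^k * v) - dZ (2^k * u)) / 2^k) := by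
    have := (summable_dZ v).sub (summable_dZ u)
    simpa [sub_div] using this
  have hdiff : takagi v - takagi u = ∑' k : ℕ, (dZ (2^k * v) - dZ (2^k * u)) / 2^k := by
    rw [takagi_eq hv, takagi_eq hu, ← Summable.tsum_sub (summable_dZ v) (summable_dZ u)]
    exact tsum_congr fun k => (sub_div _ _ _).symm
  refine ⟨∑' k : ℕ, (dZ (2^(k+n) * v) - dZ (2^(k+n) * u)) / 2^(k+n), ?_, ?_⟩
  · rw [hdiff, ← Summable.sum_add_tsum_nat_add n hsum]
  · have hb : ∀ k : ℕ, |(dZ (2^(k+n) * v) - dZ (2^(k+n) * u)) / 2^(k+n)|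
        ≤ (1/2) * (1/2)^(k+n) := by
      intro k
      rw [abs_div, abs_of_pos (a := (2:ℝ)^(k+n)) (by positivity), div_le_iff₀ (by positivity)]
      have h1 : |dZ (2^(k+n) * v) - dZ (2^(k+n) * u)| ≤ 1/2 := by
        rw [abs_sub_le_iff]
        constructor <;> nlinarith [dZ_nonneg (2^(k+n) * v), dZ_nonneg (2^(k+n) * u),
          dZ_le_half (2^(k+n) * v), dZ_le_half (2^(k+n) * u)]
      calc |dZ (2^(k+n) * v) - dZ (2^(k+n) * u)| ≤ 1/2 := h1
      _ = (1/2) * (1/2)^(k+n) * 2^(k+n) := by rw [mul_assoc, ← mul_pow]; norm_num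
    have hs2 : Summable (fun k : ℕ => (1/2:ℝ) * (1/2)^(k+n)) := by
      apply Summable.mul_left
      exact (summable_geometric_of_lt_one (by norm_num) (by norm_num)).comp_injective
        (add_left_injective n)
    have hsum' : Summable (fun k : ℕ => (dZ (2^(k+n) * v) - dZ (2^(k+n) * u)) / 2^(k+n)) :=
      hsum.comp_injective (add_left_injective n)
    calc |∑' k : ℕ, (dZ (2^(k+n) * v) - dZ (2^(k+n) * u)) / 2^(k+n)|
        ≤ ∑' k : ℕ, |(dZ (2^(k+n) * v) - dZ (2^(k+n) * u)) / 2^(k+n)| := by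
          have hn : Summable (fun k : ℕ =>
              ‖(dZ (2^(k+n) * v) - dZ (2^(k+n) * u)) / 2^(k+n)‖) := by
            simpa only [Real.norm_eq_abs] using hsum'.abs
          simpa only [Real.norm_eq_abs] using norm_tsum_le_tsum_norm hn
      _ ≤ ∑' k : ℕ, (1/2:ℝ) * (1/2)^(k+n) := Summable.tsum_le_tsum hb hsum'.abs hs2
      _ = (1/2) * ∑' k : ℕ, ((1/2:ℝ)^k * (1/2)^n) := by
          rw [tsum_mul_left]
          congr 1
          exact tsum_congr fun k => by rw [pow_add]
      _ = (1/2) * (2 * (1/2)^n) := by rw [tsum_mul_right, tsum_geometric_two]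
      _ = (1/2)^n := by ring

lemma binDigit_lt_two (x : ℝ) (k : ℕ) : binDigit x k < 2 := Nat.mod_lt _ (by norm_num)

lemma binDigit_of_lt {x : ℝ} (hx : 0 ≤ x) (k : ℕ) (h : Int.fract (2^k * x) < 1/2) :
    binDigit x (k+1) = 0 := by
  have e0 : x * 2^(k+1) = 2 * (2^k * x) := by rw [pow_succ]; ring
  have hff := Int.fract_add_floor (2^k * x)
  have hkey0 : ⌊x * 2^(k+1)⌋ = 2 * ⌊2^k * x⌋ := by
    have e1 : x * 2^(k+1) = 2 * Int.fract (2^k * x) + ((2 * ⌊2^k * x⌋ : ℤ) : ℝ) := by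
      push_cast
      linarith
    rw [e1, Int.floor_add_intCast, Int.floor_eq_zero_iff.2
      (Set.mem_Ico.2 ⟨by linarith [Int.fract_nonneg (2^k * x)], by linarith⟩)]
    ring
  have hF : 0 ≤ ⌊2^k * x⌋ := Int.floor_nonneg.2 (by positivity)
  unfold binDigit
  rw [hkey0]
  omega

lemma binDigit_of_ge {x : ℝ} (hx : 0 ≤ x) (k : ℕ) (h : 1/2 ≤ Int.fract (2^k * x)) :
    binDigit x (k+1) = 1 := by
  have e0 : x * 2^(k+1) = 2 * (2^k * x) := by rw [pow_succ]; ring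
  have hff := Int.fract_add_floor (2^k * x)
  have hkey : ⌊x * 2^(k+1)⌋ = 2 * ⌊2^k * x⌋ + 1 := by
    have e1 : x * 2^(k+1) = 2 * Int.fract (2^k * x) + ((2 * ⌊2^k * x⌋ : ℤ) : ℝ) := by
      push_cast
      linarith
    have hfl : ⌊2 * Int.fract (2^k * x)⌋ = 1 := by
      apply Int.floor_eq_iff.2
      constructor
      · push_cast; linarith
      · push_cast; linarith [Int.fract_lt_one (2^k * x)]
    rw [e1, Int.floor_add_intCast, hfl]
    ring
  have hF : 0 ≤ ⌊2^k * x⌋ := Int.floor_nonneg.2 (by positivity)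
  unfold binDigit
  rw [hkey]
  omega

lemma fract_pos {x : ℝ} (hnd : ¬ IsDyadic x) (k : ℕ) : 0 < Int.fract (2^k * x) := by
  rcases eq_or_lt_of_le (Int.fract_nonneg (2^k * x)) with h | h
  · exfalso
    apply hnd
    have hff := Int.fract_add_floor (2^k * x)
    refine ⟨⌊2^k * x⌋, k, ?_⟩
    rw [eq_div_iff (by positivity : ((2:ℝ)^k) ≠ 0)]
    linarith [mul_comm x ((2:ℝ)^k)]
  · exact h

lemma fract_ne_half {x : ℝ} (hnd : ¬ IsDyadic x) (k : ℕ) : Int.fract (2^k * x) ≠ 1/2 := by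
  intro h
  apply hnd
  refine ⟨2 * ⌊2^k * x⌋ + 1, k + 1, ?_⟩
  have hff := Int.fract_add_floor (2^k * x)
  have e0 : x * 2^(k+1) = 2 * (2^k * x) := by rw [pow_succ]; ring
  rw [eq_div_iff (by positivity : ((2:ℝ)^(k+1)) ≠ 0)]
  push_cast
  linarith
lemma slope_nc (x u v : ℝ) (k : ℕ) (hu : 0 < u) (huv : u < v)
    (hxe : x = u ∨ x = v)
    (hf0 : 0 < Int.fract (2^k * x)) (hf1 : Int.fract (2^k * x) ≠ 1/2)
    (hlen : 2^k * (v - u) ≤ 1/2)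
    (hno : ∀ j : ℤ, ¬ (u < (j:ℝ) / 2^(k+1) ∧ (j:ℝ)/2^(k+1) < v)) :
    dZ (2^k * v) - dZ (2^k * u) = (1 - 2*(binDigit x (k+1):ℝ)) * (2^k * (v - u)) := by
  have hx0 : 0 ≤ x := by rcases hxe with h | h <;> subst h <;> linarith
  have h2k : (0:ℝ) < 2^k := by positivity
  have h2k1 : (0:ℝ) < 2^(k+1) := by positivity
  have e2 : (2:ℝ)^(k+1) = 2 * 2^k := by rw [pow_succ]; ring
  have eu2 : u * 2^(k+1) = 2*(2^k*u) := by rw [e2]; ring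
  have ev2 : v * 2^(k+1) = 2*(2^k*v) := by rw [e2]; ring
  have hfF := Int.fract_add_floor (2^k * x)
  have hflt := Int.fract_lt_one (2^k * x)
  set F := ⌊2^k * x⌋ with hFdef
  have hlen' : (2:ℝ)^k * v - 2^k * u ≤ 1/2 := by linarith [(by ring : (2:ℝ)^k * (v-u) = 2^k*v - 2^k*u)]
  have huv2 : (2:ℝ)^k * u < 2^k * v := by
    have := mul_lt_mul_of_pos_left huv h2k
    linarith
  rcases lt_or_gt_of_ne hf1 with hlt | hgt
  · have hdig := binDigit_of_lt hx0 k hlt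
    have CL1 : (F:ℝ) ≤ 2^k * u := by
      rcases hxe with h | h
      · rw [hFdef, h]; exact Int.floor_le ((2:ℝ)^k * u)
      · subst h
        by_contra hcon
        push_neg at hcon
        refine hno (2*F) ⟨?_, ?_⟩
        · rw [lt_div_iff₀ h2k1]; push_cast; linarith
        · rw [div_lt_iff₀ h2k1]; push_cast; linarith
    have CL2 : 2^k * v ≤ (F:ℝ) + 1/2 := by
      rcases hxe with h | h
      · subst h
        by_contra hcon
        push_neg at hcon
        refine hno (2*F+1) ⟨?_, ?_⟩
        · rw [lt_div_iff₀ h2k1]; push_cast; linarith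
        · rw [div_lt_iff₀ h2k1]; push_cast; linarith
      · subst h; linarith
    rw [dZ_left F (2^k * u) CL1 (by linarith), dZ_left F (2^k * v) (by linarith) CL2, hdig]
    push_cast
    ring
  · have hdig := binDigit_of_ge hx0 k hgt.le
    have CL1 : (F:ℝ) + 1/2 ≤ 2^k * u := by
      rcases hxe with h | h
      · subst h; linarith
      · subst h
        by_contra hcon
        push_neg at hcon
        refine hno (2*F+1) ⟨?_, ?_⟩
        · rw [lt_div_iff₀ h2k1]; push_cast; linarith
        · rw [div_lt_iff₀ h2k1]; push_cast; linarith
    have CL2 : 2^k * v ≤ (F:ℝ) + 1 := by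
      rcases hxe with h | h
      · subst h
        by_contra hcon
        push_neg at hcon
        refine hno (2*F+2) ⟨?_, ?_⟩
        · rw [lt_div_iff₀ h2k1]; push_cast; linarith
        · rw [div_lt_iff₀ h2k1]; push_cast; linarith
      · subst h; linarith
    rw [dZ_right F (2^k * u) CL1 (by linarith), dZ_right F (2^k * v) (by linarith) CL2, hdig]
    push_cast
    ring
lemma slope_cr (x u v c : ℝ) (s : ℝ) (k : ℕ) (j : ℤ) (hu : 0 < u) (huv : u < v)
    (hs : (x = u ∧ s = 1) ∨ (x = v ∧ s = -1))
    (hf0 : 0 < Int.fract (2^k * x)) (hf1 : Int.fract (2^k * x) ≠ 1/2)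
    (hlen : 2^k * (v - u) ≤ 1/2)
    (hc1 : u < c) (hc2 : c < v) (hj : (j:ℝ) = 2^(k+1) * c) :
    dZ (2^k * v) - dZ (2^k * u)
      = (1 - 2*(binDigit x (k+1):ℝ)) * s * (2^k * (2*c - u - v)) := by
  have hx0 : 0 ≤ x := by rcases hs with ⟨h, _⟩ | ⟨h, _⟩ <;> subst h <;> linarith
  have h2k : (0:ℝ) < 2^k := by positivity
  have e2 : (2:ℝ)^(k+1) = 2 * 2^k := by rw [pow_succ]; ring
  have hP : (j:ℝ) = 2 * (2^k * c) := by rw [hj, e2]; ring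
  have hfF := Int.fract_add_floor (2^k * x)
  have hflt := Int.fract_lt_one (2^k * x)
  set F := ⌊2^k * x⌋ with hFdef
  have hlen' : (2:ℝ)^k * v - 2^k * u ≤ 1/2 := by
    linarith [(by ring : (2:ℝ)^k * (v-u) = 2^k*v - 2^k*u)]
  have hPu : (2:ℝ)^k * u < 2^k * c := by
    have := mul_lt_mul_of_pos_left hc1 h2k; linarith
  have hPv : (2:ℝ)^k * c < 2^k * v := by
    have := mul_lt_mul_of_pos_left hc2 h2k; linarith
  rcases lt_or_gt_of_ne hf1 with hlt | hgt
  · have hdig := binDigit_of_lt hx0 k hlt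
    rcases hs with ⟨hxu, hs1⟩ | ⟨hxv, hs1⟩
    · -- f < 1/2, x = u : P = F + 1/2
      subst hxu
      have hjlo : 2*F < j := by
        have : ((2*F : ℤ):ℝ) < (j:ℝ) := by push_cast; linarith
        exact_mod_cast this
      have hjhi : j < 2*F + 2 := by
        have : (j:ℝ) < ((2*F+2 : ℤ):ℝ) := by push_cast; linarith
        exact_mod_cast this
      have hjval : j = 2*F + 1 := by omega
      have hPval : 2*((2:ℝ)^k*c) = 2*F + 1 := by
        rw [← hP, hjval]; push_cast; ring
      rw [dZ_left F (2^k * x) (by rw [hFdef]; exact Int.floor_le _) (by linarith),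
          dZ_right F (2^k * v) (by linarith) (by linarith), hdig, hs1]
      push_cast
      linear_combination -hPval
    · -- f < 1/2, x = v : P = F
      subst hxv
      have hjlo : 2*F - 1 < j := by
        have : ((2*F - 1 : ℤ):ℝ) < (j:ℝ) := by push_cast; linarith
        exact_mod_cast this
      have hjhi : j < 2*F + 1 := by
        have : (j:ℝ) < ((2*F+1 : ℤ):ℝ) := by push_cast; linarith
        exact_mod_cast this
      have hjval : j = 2*F := by omega
      have hPval : 2*((2:ℝ)^k*c) = 2*F := by
        rw [← hP, hjval]; push_cast; ring
      rw [dZ_right (F-1) (2^k * u) (by push_cast; linarith) (by push_cast; linarith),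
          dZ_left F (2^k * x) (by linarith) (by linarith), hdig, hs1]
      push_cast
      linear_combination hPval
  · have hdig := binDigit_of_ge hx0 k hgt.le
    rcases hs with ⟨hxu, hs1⟩ | ⟨hxv, hs1⟩
    · -- f > 1/2, x = u : P = F + 1
      subst hxu
      have hjlo : 2*F + 1 < j := by
        have : ((2*F+1 : ℤ):ℝ) < (j:ℝ) := by push_cast; linarith
        exact_mod_cast this
      have hjhi : j < 2*F + 3 := by
        have : (j:ℝ) < ((2*F+3 : ℤ):ℝ) := by push_cast; linarith
        exact_mod_cast this
      have hjval : j = 2*F + 2 := by omega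
      have hPval : 2*((2:ℝ)^k*c) = 2*F + 2 := by
        rw [← hP, hjval]; push_cast; ring
      rw [dZ_right F (2^k * x) (by linarith) (by linarith),
          dZ_left (F+1) (2^k * v) (by push_cast; linarith) (by push_cast; linarith), hdig, hs1]
      push_cast
      linear_combination hPval
    · -- f > 1/2, x = v : P = F + 1/2
      subst hxv
      have hjlo : 2*F < j := by
        have : ((2*F : ℤ):ℝ) < (j:ℝ) := by push_cast; linarith
        exact_mod_cast this
      have hjhi : j < 2*F + 2 := by
        have : (j:ℝ) < ((2*F+2 : ℤ):ℝ) := by push_cast; linarith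
        exact_mod_cast this
      have hjval : j = 2*F + 1 := by omega
      have hPval : 2*((2:ℝ)^k*c) = 2*F + 1 := by
        rw [← hP, hjval]; push_cast; ring
      rw [dZ_left F (2^k * u) (by linarith) (by linarith),
          dZ_right F (2^k * x) (by linarith) (by linarith), hdig, hs1]
      push_cast
      linear_combination -hPval

set_option maxHeartbeats 1000000 in
lemma key_bound (B : ℕ → ℕ) (hmono : Monotone B)
    (d : ℝ) (hd0 : 0 < d) (hd12 : d < 1/2)
    (hB : Tendsto (fun n : ℕ => (B n : ℝ)/n) atTop (𝓝 d)) (C : ℝ) :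
    ∃ N : ℕ, 1 ≤ N ∧ ∀ n : ℕ, N ≤ n →
      ((C ≤ (n:ℝ) - 2*(B n) - 4) ∧
       ∀ L : ℕ, L ≤ n → B L = B n → C ≤ 2*(L:ℝ) - n - 2*(B n) - 4) := by
  set δ : ℝ := d*(1-2*d)/8 with hδdef
  set κ : ℝ := d*(1-2*d)/4 with hκdef
  have hδpos : 0 < δ := by rw [hδdef]; nlinarith
  have hκpos : 0 < κ := by rw [hκdef]; nlinarith
  have hδsmall : δ ≤ 1/16 := by rw [hδdef]; nlinarith [sq_nonneg (1 - 4*d)]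
  have hκ2δ : κ = 2*δ := by rw [hκdef, hδdef]; ring
  -- eventually bound on B n / n
  have hev : ∀ᶠ n : ℕ in atTop, |(B n : ℝ)/n - d| < δ := by
    have := Metric.tendsto_nhds.1 hB δ hδpos
    simpa [Real.dist_eq] using this
  obtain ⟨N0, hN0⟩ := eventually_atTop.1 hev
  set N1 : ℕ := max N0 1 with hN1def
  have hN1 : ∀ n : ℕ, N1 ≤ n → (d - δ)*n ≤ (B n : ℝ) ∧ (B n : ℝ) ≤ (d + δ)*n := by
    intro n hn
    have hn1 : 1 ≤ n := le_trans (le_max_right _ _) hn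
    have hnpos : (0:ℝ) < n := by exact_mod_cast hn1
    have h := hN0 n (le_trans (le_max_left _ _) hn)
    rw [abs_sub_lt_iff] at h
    constructor
    · rw [← sub_nonneg]
      have : (B n : ℝ)/n - (d - δ) > 0 := by
        have := h.2; nlinarith [div_nonneg (Nat.cast_nonneg (B n)) hnpos.le]
      nlinarith [mul_pos this hnpos, (div_mul_cancel₀ ((B n : ℝ)) hnpos.ne' : (B n:ℝ)/n * n = B n)]
    · have : (B n : ℝ)/n < d + δ := by linarith [h.1]
      nlinarith [(div_mul_cancel₀ ((B n : ℝ)) hnpos.ne' : (B n:ℝ)/n * n = B n)]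
  have hBL : ∀ L : ℕ, (B L : ℝ) ≤ (d + δ)*L + N1 := by
    intro L
    rcases le_or_gt N1 L with h | h
    · have := (hN1 L h).2
      have : (B L : ℝ) ≤ (d+δ)*L := this
      have hN1nn : (0:ℝ) ≤ N1 := Nat.cast_nonneg _
      linarith
    · have h1 : B L ≤ B N1 := hmono h.le
      have h2 : (B N1 : ℝ) ≤ (d+δ)*N1 := (hN1 N1 le_rfl).2
      have h3 : (d+δ)*(N1:ℝ) ≤ N1 := by
        have : (0:ℝ) ≤ N1 := Nat.cast_nonneg _
        nlinarith
      have h4 : (0:ℝ) ≤ (d+δ)*L := by positivity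
      have h5 : (B L : ℝ) ≤ (B N1 : ℝ) := by exact_mod_cast h1
      linarith
  obtain ⟨N2, hN2⟩ := exists_nat_ge (max ((C+4)/κ) ((2*N1 + (d+δ)*(4+C))/κ))
  refine ⟨max N1 (max N2 1), le_trans (le_max_right _ _) (le_max_right _ _), fun n hn => ?_⟩
  have hnN1 : N1 ≤ n := le_trans (le_max_left _ _) hn
  have hnN2 : (N2:ℝ) ≤ n := by
    have : N2 ≤ n := le_trans (le_trans (le_max_left _ _) (le_max_right _ _)) hn
    exact_mod_cast this
  have hκn1 : C + 4 ≤ κ*n := by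
    have h1 : (C+4)/κ ≤ (n:ℝ) := le_trans (le_trans (le_max_left _ _) hN2) hnN2
    rw [div_le_iff₀ hκpos] at h1
    linarith
  have hκn2 : 2*(N1:ℝ) + (d+δ)*(4+C) ≤ κ*n := by
    have h1 : (2*N1 + (d+δ)*(4+C))/κ ≤ (n:ℝ) := le_trans (le_trans (le_max_right _ _) hN2) hnN2
    rw [div_le_iff₀ hκpos] at h1
    linarith
  obtain ⟨hBn1, hBn2⟩ := hN1 n hnN1
  have hnnn : (0:ℝ) ≤ n := Nat.cast_nonneg _
  constructor
  · -- C ≤ n - 2 B n - 4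
    have hcoef : κ ≤ 1 - 2*d - 2*δ := by
      rw [hκdef, hδdef]
      nlinarith [mul_nonneg (by linarith : (0:ℝ) ≤ 1-2*d) (by linarith : (0:ℝ) ≤ 2 - d)]
    have hh := mul_le_mul_of_nonneg_left hcoef hnnn
    linarith only [hh, hκn1, hBn2, hnnn]
  · intro L hLn hBLn
    have hc1 : (B n : ℝ) ≤ (d+δ)*L + N1 := by
      rw [← (by exact_mod_cast congrArg (fun t : ℕ => (t:ℝ)) hBLn : (B L : ℝ) = B n)]
      exact hBL L
    -- coefficient bound : 2(d-δ) - (d+δ) - 2(d+δ)^2 ≥ κ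
    have hexp : 8*δ = d*(1-2*d) := by rw [hδdef]; ring
    have hcoef : κ ≤ 2*(d-δ) - (d+δ) - 2*(d+δ)^2 := by
      have heq : 2*(d-δ) - (d+δ) - 2*(d+δ)^2 - κ = δ*(3-4*d-2*δ) := by
        rw [hκ2δ]; linear_combination -hexp
      have h34 : (0:ℝ) ≤ 3 - 4*d - 2*δ := by nlinarith
      have hp : 0 ≤ δ*(3 - 4*d - 2*δ) := mul_nonneg hδpos.le h34
      linarith
    have hmul : (d+δ)*(B n : ℝ) ≤ (d+δ)*((d+δ)*n) :=
      mul_le_mul_of_nonneg_left hBn2 (by positivity)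
    have hq : (d+δ)*(2*(L:ℝ) - n - 2*(B n) - 4 - C) ≥ κ*n - (2*N1 + (d+δ)*(4+C)) := by
      have e : (d+δ)*(2*(L:ℝ) - n - 2*(B n) - 4 - C)
          = 2*((d+δ)*L) - (d+δ)*n - 2*((d+δ)*(B n:ℝ)) - (d+δ)*(4+C) := by ring
      rw [e]
      have hh := mul_le_mul_of_nonneg_left hcoef hnnn
      linarith only [hc1, hmul, hBn1, hh]
    have hfin : (d+δ)*(2*(L:ℝ) - n - 2*(B n) - 4 - C) ≥ 0 := by linarith
    have hpos : (0:ℝ) < d + δ := by linarith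
    have hX : 0 ≤ 2*(L:ℝ) - n - 2*(B n) - 4 - C := (mul_nonneg_iff_of_pos_left hpos).1 hfin
    linarith

noncomputable def Bsum (x : ℝ) (m : ℕ) : ℕ := ∑ k ∈ Finset.range m, binDigit x (k+1)
noncomputable def Ssum (x : ℝ) (m : ℕ) : ℝ :=
  ∑ k ∈ Finset.range m, (1 - 2*(binDigit x (k+1):ℝ))

lemma Ssum_eq (x : ℝ) (m : ℕ) : Ssum x m = m - 2*(Bsum x m) := by
  unfold Ssum Bsum
  rw [Finset.sum_sub_distrib, Finset.sum_const, Finset.card_range, Nat.cast_sum,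
    Finset.mul_sum]
  simp

lemma Bsum_mono (x : ℝ) : Monotone (Bsum x) := fun a b hab =>
  Finset.sum_le_sum_of_subset (Finset.range_subset_range.2 hab)

lemma abs_sigma_le (x : ℝ) (k : ℕ) : |1 - 2*(binDigit x (k+1):ℝ)| ≤ 1 := by
  have h := binDigit_lt_two x (k+1)
  interval_cases h' : binDigit x (k+1) <;> simp_all <;> norm_num

lemma pow_half_le {k n : ℕ} (hk : k < n) : (2:ℝ)^k * (1/2)^n ≤ 1/2 := by
  have hn : n = k + (n - k) := by omega
  rw [hn, pow_add, ← mul_assoc, ← mul_pow]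
  norm_num
  calc (1/2:ℝ)^(n-k) ≤ (1/2)^1 := by
        apply pow_le_pow_of_le_one (by norm_num) (by norm_num) (by omega)
  _ = 1/2 := by norm_num

lemma pow_half_le_one {m n : ℕ} (hk : m ≤ n) : (2:ℝ)^m * (1/2)^n ≤ 1 := by
  have hn : n = m + (n - m) := by omega
  rw [hn, pow_add, ← mul_assoc, ← mul_pow]
  norm_num
  apply pow_le_one₀ (by norm_num) (by norm_num)

lemma exists_dyadic_between {u v : ℝ} (huv : u < v) :
    ∃ m : ℕ, ∃ j : ℤ, u < (j:ℝ)/2^m ∧ (j:ℝ)/2^m < v := by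
  obtain ⟨m, hm⟩ := exists_pow_lt_of_lt_one (by linarith : (0:ℝ) < v - u)
    (by norm_num : (1:ℝ)/2 < 1)
  refine ⟨m, ⌊u * 2^m⌋ + 1, ?_, ?_⟩
  · rw [lt_div_iff₀ (by positivity)]
    push_cast
    exact Int.lt_floor_add_one (u * 2^m)
  · rw [div_lt_iff₀ (by positivity)]
    have h1 : ((⌊u * 2^m⌋ : ℝ) + 1) ≤ u * 2^m + 1 := by
      linarith [Int.floor_le (u * 2^m)]
    have h2 : (1/2:ℝ)^m * 2^m = 1 := by rw [← mul_pow]; norm_num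
    push_cast
    nlinarith [hm, (by positivity : (0:ℝ) < (2:ℝ)^m)]

set_option maxHeartbeats 1600000 in
lemma main_est (x : ℝ) (hx : x ∈ Ioo (0:ℝ) 1) (hnd : ¬ IsDyadic x)
    (h : ℝ) (hh0 : h ≠ 0) (hxh : x + h ∈ Ioo (0:ℝ) 1) (n : ℕ)
    (hn1 : |h| ≤ (1/2)^n) (hn2 : (1/2)^(n+1) ≤ |h|) :
    (n:ℝ) - 2*(Bsum x n) - 4 ≤ (takagi (x+h) - takagi x)/h ∨
    (∃ L : ℕ, 1 ≤ L ∧ L ≤ n ∧ Bsum x L = Bsum x n ∧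
      2*(L:ℝ) - n - 2*(Bsum x n) - 4 ≤ (takagi (x+h) - takagi x)/h) := by
  obtain ⟨hx0, hx1⟩ := hx
  obtain ⟨hxh0, hxh1⟩ := hxh
  obtain ⟨u, v, huv, hside⟩ : ∃ u v : ℝ, u < v ∧
      ((x = u ∧ x + h = v) ∨ (x = v ∧ x + h = u)) := by
    rcases lt_or_gt_of_ne hh0 with hneg | hpos
    · exact ⟨x + h, x, by linarith, Or.inr ⟨rfl, rfl⟩⟩
    · exact ⟨x, x + h, by linarith, Or.inl ⟨rfl, rfl⟩⟩
  have hu0 : 0 < u := by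
    rcases hside with ⟨h1, h2⟩ | ⟨h1, h2⟩
    · rw [← h1]; exact hx0
    · rw [← h2]; exact hxh0
  have hv1 : v < 1 := by
    rcases hside with ⟨h1, h2⟩ | ⟨h1, h2⟩
    · rw [← h2]; exact hxh1
    · rw [← h1]; exact hx1
  have hxuv : x = u ∨ x = v := by rcases hside with ⟨h1, _⟩ | ⟨h1, _⟩
                                  · exact Or.inl h1
                                  · exact Or.inr h1
  have hvuh : v - u = |h| := by
    rcases hside with ⟨h1, h2⟩ | ⟨h1, h2⟩
    · rw [abs_of_pos (by linarith : (0:ℝ) < h)]; linarith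
    · rw [abs_of_neg (by linarith : h < (0:ℝ))]; linarith
  -- quotient rewritten symmetrically
  have hQ : (takagi (x+h) - takagi x)/h = (takagi v - takagi u)/(v - u) := by
    rcases hside with ⟨h1, h2⟩ | ⟨h1, h2⟩
    · have hh : h = v - u := by linarith
      rw [h2, h1, hh]
    · have hh : h = -(v - u) := by linarith
      rw [h2, h1, hh, show takagi u - takagi v = -(takagi v - takagi u) by ring,
        neg_div_neg_eq]
  rw [hQ]
  set q := (takagi v - takagi u)/(v - u) with hqdef
  -- the minimal dyadic level intersecting (u,v)
  have hPex : ∃ m : ℕ, ∃ j : ℤ, u < (j:ℝ)/2^m ∧ (j:ℝ)/2^m < v := exists_dyadic_between huv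
  classical
  set L := Nat.find hPex with hLdef
  obtain ⟨jc, hjc1, hjc2⟩ : ∃ j : ℤ, u < (j:ℝ)/2^L ∧ (j:ℝ)/2^L < v := Nat.find_spec hPex
  set c : ℝ := (jc:ℝ)/2^L with hcdef
  have hmin : ∀ m, m < L → ∀ j : ℤ, ¬ (u < (j:ℝ)/2^m ∧ (j:ℝ)/2^m < v) := by
    intro m hm j hj
    exact Nat.find_min hPex hm ⟨j, hj⟩
  have hL1 : 1 ≤ L := by
    by_contra hcon
    have hL0 : (2:ℝ)^L = 1 := by
      have hc0 : L = 0 := by omega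
      rw [hc0]; norm_num
    have ha : u < (jc:ℝ) := by
      have := hjc1; rw [hcdef, hL0, div_one] at this; exact this
    have hb : (jc:ℝ) < v := by
      have := hjc2; rw [hcdef, hL0, div_one] at this; exact this
    have h2 : (0:ℤ) < jc := by exact_mod_cast lt_trans hu0 ha
    have h3 : (1:ℝ) ≤ (jc:ℝ) := by exact_mod_cast h2
    linarith
  have hjcpos : (1:ℤ) ≤ jc := by
    have h1 : (0:ℝ) < (jc:ℝ)/2^L := lt_trans hu0 hjc1
    have h2 : (0:ℝ) < (jc:ℝ) := by
      by_contra hcon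
      push_neg at hcon
      have : (jc:ℝ)/2^L ≤ 0 := div_nonpos_iff.2 (Or.inr ⟨hcon, by positivity⟩)
      linarith
    exact_mod_cast h2
  have huIcc : u ∈ Icc (0:ℝ) 1 := ⟨hu0.le, by linarith⟩
  have hvIcc : v ∈ Icc (0:ℝ) 1 := ⟨by linarith, hv1.le⟩
  have hvu_pos : (0:ℝ) < v - u := by linarith
  have hvu_le : v - u ≤ (1/2)^n := by rw [hvuh]; exact hn1
  have hvu_ge : (1/2)^(n+1) ≤ v - u := by rw [hvuh]; exact hn2
  have hlen : ∀ k : ℕ, k < n → (2:ℝ)^k * (v - u) ≤ 1/2 := by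
    intro k hk
    calc (2:ℝ)^k * (v - u) ≤ 2^k * (1/2)^n := by
          apply mul_le_mul_of_nonneg_left hvu_le (by positivity)
    _ ≤ 1/2 := pow_half_le hk
  obtain ⟨R, hR, hRb⟩ := takagi_diff huIcc hvIcc n
  have hRub : |R| ≤ 2 * (v - u) := by
    have : (1/2:ℝ)^n = 2 * (1/2)^(n+1) := by rw [pow_succ]; ring
    linarith
  -- digit formulas in the crossing zone
  have hfloor : ∀ m : ℕ, L ≤ m → m ≤ n →
      (∀ hxv : x = v, ⌊x * 2^m⌋ = jc * 2^(m-L)) ∧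
      (∀ hxu : x = u, ⌊x * 2^m⌋ = jc * 2^(m-L) - 1) := by
    intro m hLm hmn
    have hcast : ((jc * 2^(m-L) : ℤ) : ℝ) = 2^m * c := by
      push_cast
      rw [hcdef]
      rw [show (2:ℝ)^(m-L) = 2^m / 2^L by
        rw [eq_div_iff (by positivity : ((2:ℝ)^L) ≠ 0), ← pow_add]
        congr 1
        omega]
      ring
    have hcv : 2^m * (v - u) ≤ 1 := by
      calc (2:ℝ)^m * (v - u) ≤ 2^m * (1/2)^n :=
            mul_le_mul_of_nonneg_left hvu_le (by positivity)
      _ ≤ 1 := pow_half_le_one hmn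
    have h2m : (0:ℝ) < 2^m := by positivity
    constructor
    · intro hxv
      apply Int.floor_eq_iff.2
      constructor
      · rw [hcast, hxv]
        have := mul_le_mul_of_nonneg_left hjc2.le h2m.le
        calc (2:ℝ)^m * c ≤ 2^m * v := mul_le_mul_of_nonneg_left hjc2.le h2m.le
        _ = v * 2^m := by ring
      · rw [hcast, hxv]
        have h1 : v - c < v - u := by linarith
        nlinarith
    · intro hxu
      apply Int.floor_eq_iff.2
      constructor
      · push_cast
        rw [show ((jc:ℝ) * 2^(m-L) : ℝ) = 2^m * c by exact_mod_cast hcast]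
        rw [hxu]
        have h1 : c - u < v - u := by linarith
        nlinarith
      · push_cast
        rw [show ((jc:ℝ) * 2^(m-L) : ℝ) = 2^m * c by exact_mod_cast hcast]
        rw [hxu]
        have := mul_lt_mul_of_pos_left hjc1 h2m
        nlinarith
  have hdig1 : ∀ m : ℕ, L < m → m ≤ n → x = u → binDigit x m = 1 := by
    intro m hLm hmn hxu
    have hf := (hfloor m hLm.le hmn).2 hxu
    unfold binDigit
    rw [hf]
    obtain ⟨e, he⟩ : ∃ e, m - L = e + 1 := ⟨m - L - 1, by omega⟩
    rw [he, pow_succ]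
    have hw : (1:ℤ) ≤ jc * 2^e := by
      have := mul_pos (show (0:ℤ) < jc by omega) (show (0:ℤ) < 2^e by positivity)
      linarith
    generalize hgen : jc * 2^e = w at hw ⊢
    rw [show jc * (2^e * 2) - 1 = 2*(jc*2^e) - 1 by ring, hgen]
    omega
  have hdig0 : ∀ m : ℕ, L < m → m ≤ n → x = v → binDigit x m = 0 := by
    intro m hLm hmn hxv
    have hf := (hfloor m hLm.le hmn).1 hxv
    unfold binDigit
    rw [hf]
    obtain ⟨e, he⟩ : ∃ e, m - L = e + 1 := ⟨m - L - 1, by omega⟩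
    rw [he, pow_succ]
    have hw : (0:ℤ) ≤ jc * 2^e := by positivity
    generalize hgen : jc * 2^e = w at hw ⊢
    rw [show jc * (2^e * 2) = 2*(jc*2^e) by ring, hgen]
    omega
  -- fract facts
  have hf0 : ∀ k : ℕ, 0 < Int.fract (2^k * x) := fract_pos hnd
  have hf12 : ∀ k : ℕ, Int.fract (2^k * x) ≠ 1/2 := fract_ne_half hnd
  -- generic lower bound machine
  have hqbound : ∀ A D w : ℝ, |w| ≤ v - u →
      takagi v - takagi u = A*(v-u) + D*w + R → A - |D| - 2 ≤ q := by
    intro A D w hw hEq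
    by_contra hcon
    push_neg at hcon
    have hq1 : q * (v - u) = A*(v-u) + D*w + R := by
      rw [hqdef, div_mul_cancel₀ _ (ne_of_gt hvu_pos)]
      exact hEq
    have h2 : |D*w| ≤ |D| * (v-u) := by
      rw [abs_mul]
      exact mul_le_mul_of_nonneg_left hw (abs_nonneg D)
    have h1 : -(|D| * (v-u)) ≤ D*w := by linarith [neg_abs_le (D*w)]
    have h3 : -(2*(v-u)) ≤ R := by linarith [neg_abs_le R]
    have h4 := mul_lt_mul_of_pos_right hcon hvu_pos
    nlinarith [abs_nonneg D]
  by_cases hLn : L ≤ n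
  · -- crossing case
    have hL1n : L - 1 ≤ n := by omega
    have hcastL : ((L - 1 : ℕ) : ℝ) = (L:ℝ) - 1 := by
      have : (1:ℕ) ≤ L := hL1
      push_cast [Nat.cast_sub this]
      ring
    have hcastnL : ((n - L : ℕ) : ℝ) = (n:ℝ) - L := by
      push_cast [Nat.cast_sub hLn]
      ring
    have hLsucc : L = (L-1) + 1 := by omega
    have hSL : Ssum x L = Ssum x (L-1) + (1 - 2*(binDigit x ((L-1)+1):ℝ)) := by
      rw [hLsucc]
      exact Finset.sum_range_succ _ (L-1)
    have hsigL := abs_sigma_le x (L-1)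
    -- crossing slope values
    have hcross : ∀ s : ℝ, ((x = u ∧ s = 1) ∨ (x = v ∧ s = -1)) →
        ∀ k ∈ Finset.Ico (L-1) n, (dZ (2^k * v) - dZ (2^k * u)) / 2^k
          = (1 - 2*(binDigit x (k+1):ℝ)) * (s * (2*c - u - v)) := by
      intro s hs k hk
      rw [Finset.mem_Ico] at hk
      have hkL : L ≤ k + 1 := by omega
      have hj : ((jc * 2^(k+1-L) : ℤ) : ℝ) = 2^(k+1) * c := by
        push_cast
        rw [hcdef, show (2:ℝ)^(k+1-L) = 2^(k+1) / 2^L by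
          rw [eq_div_iff (by positivity : ((2:ℝ)^L) ≠ 0), ← pow_add]
          congr 1
          omega]
        ring
      rw [slope_cr x u v c s k (jc * 2^(k+1-L)) hu0 huv hs (hf0 k) (hf12 k)
        (hlen k hk.2) hjc1 hjc2 hj]
      have h2k : ((2:ℝ)^k) ≠ 0 := by positivity
      field_simp
    have hnc : ∀ k ∈ Finset.range (L-1), (dZ (2^k * v) - dZ (2^k * u)) / 2^k
        = (1 - 2*(binDigit x (k+1):ℝ)) * (v - u) := by
      intro k hk
      rw [Finset.mem_range] at hk
      have hkn : k < n := by omega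
      rw [slope_nc x u v k hu0 huv hxuv (hf0 k) (hf12 k) (hlen k hkn)
        (hmin (k+1) (by omega))]
      have h2k : ((2:ℝ)^k) ≠ 0 := by positivity
      field_simp
    have hIcoS : ∀ m : ℕ, (∑ k ∈ Finset.Ico (L-1) n, (1 - 2*(binDigit x (k+1):ℝ)))
        = Ssum x n - Ssum x (L-1) := by
      intro _
      have := Finset.sum_range_add_sum_Ico
        (fun k => (1 - 2*(binDigit x (k+1):ℝ))) hL1n
      unfold Ssum
      linarith
    rcases hxuv with hxu | hxv
    · -- x = u : h > 0 side; digits are 1 in (L, n]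
      left
      have hEq : takagi v - takagi u = (Ssum x (L-1))*(v-u)
          + (Ssum x n - Ssum x (L-1))*(1*(2*c - u - v)) + R := by
        rw [hR, ← Finset.sum_range_add_sum_Ico _ hL1n,
          Finset.sum_congr rfl hnc,
          Finset.sum_congr rfl (hcross 1 (Or.inl ⟨hxu, rfl⟩)),
          ← Finset.sum_mul, ← Finset.sum_mul, hIcoS 0]
        rfl
      have hw : |1*(2*c - u - v)| ≤ v - u := by
        rw [one_mul, abs_le]
        constructor <;> nlinarith
      have hqb := hqbound _ _ _ hw hEq
      -- digit sums
      have hSsum_digits : Ssum x n - Ssum x L = -(((n:ℝ) - L)) := by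
        have h1 : (∑ k ∈ Finset.Ico L n, (1 - 2*(binDigit x (k+1):ℝ)))
            = Ssum x n - Ssum x L := by
          have := Finset.sum_range_add_sum_Ico
            (fun k => (1 - 2*(binDigit x (k+1):ℝ))) hLn
          unfold Ssum
          linarith
        have hterm : ∀ k ∈ Finset.Ico L n, (1 - 2*(binDigit x (k+1):ℝ)) = -1 := by
          intro k hk
          rw [Finset.mem_Ico] at hk
          rw [hdig1 (k+1) (by omega) (by omega) hxu]
          norm_num
        rw [← h1, Finset.sum_congr rfl hterm, Finset.sum_const, Nat.card_Ico,
          nsmul_eq_mul, hcastnL]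
        ring
      have hD : Ssum x n - Ssum x (L-1)
          = -(((n:ℝ) - L)) + (1 - 2*(binDigit x ((L-1)+1):ℝ)) := by
        rw [← hSsum_digits, hSL]; ring
      have habsD : |Ssum x n - Ssum x (L-1)| ≤ ((n:ℝ) - L) + 1 := by
        rw [hD, abs_le]
        have hnL : (0:ℝ) ≤ (n:ℝ) - L := by
          have : (L:ℝ) ≤ n := by exact_mod_cast hLn
          linarith
        constructor <;> [linarith [abs_le.1 hsigL]; linarith [abs_le.1 hsigL]]
      have hA : Ssum x (L-1) = Ssum x n + ((n:ℝ) - L) - (1 - 2*(binDigit x ((L-1)+1):ℝ)) := by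
        linarith [hSL, hSsum_digits]
      have hfinal : Ssum x n - 4 ≤ q := by
        have := abs_le.1 hsigL
        linarith
      rw [Ssum_eq] at hfinal
      linarith
    · -- x = v : h < 0 side; digits are 0 in (L, n]
      right
      refine ⟨L, hL1, hLn, ?_, ?_⟩
      · -- Bsum x L = Bsum x n
        have h1 : Bsum x L + ∑ k ∈ Finset.Ico L n, binDigit x (k+1) = Bsum x n :=
          Finset.sum_range_add_sum_Ico _ hLn
        have h2 : ∑ k ∈ Finset.Ico L n, binDigit x (k+1) = 0 := by
          apply Finset.sum_eq_zero
          intro k hk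
          rw [Finset.mem_Ico] at hk
          exact hdig0 (k+1) (by omega) (by omega) hxv
        omega
      · have hEq : takagi v - takagi u = (Ssum x (L-1))*(v-u)
            + (Ssum x n - Ssum x (L-1))*((-1)*(2*c - u - v)) + R := by
          rw [hR, ← Finset.sum_range_add_sum_Ico _ hL1n,
            Finset.sum_congr rfl hnc,
            Finset.sum_congr rfl (hcross (-1) (Or.inr ⟨hxv, rfl⟩)),
            ← Finset.sum_mul, ← Finset.sum_mul, hIcoS 0]
          rfl
        have hw : |(-1)*(2*c - u - v)| ≤ v - u := by
          rw [neg_one_mul, abs_neg, abs_le]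
          constructor <;> nlinarith
        have hqb := hqbound _ _ _ hw hEq
        have hSsum_digits : Ssum x n - Ssum x L = ((n:ℝ) - L) := by
          have h1 : (∑ k ∈ Finset.Ico L n, (1 - 2*(binDigit x (k+1):ℝ)))
              = Ssum x n - Ssum x L := by
            have := Finset.sum_range_add_sum_Ico
              (fun k => (1 - 2*(binDigit x (k+1):ℝ))) hLn
            unfold Ssum
            linarith
          have hterm : ∀ k ∈ Finset.Ico L n, (1 - 2*(binDigit x (k+1):ℝ)) = 1 := by
            intro k hk
            rw [Finset.mem_Ico] at hk
            rw [hdig0 (k+1) (by omega) (by omega) hxv]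
            norm_num
          rw [← h1, Finset.sum_congr rfl hterm, Finset.sum_const, Nat.card_Ico,
            nsmul_eq_mul, hcastnL]
          ring
        have habsD : |Ssum x n - Ssum x (L-1)| ≤ ((n:ℝ) - L) + 1 := by
          have hD : Ssum x n - Ssum x (L-1)
              = ((n:ℝ) - L) + (1 - 2*(binDigit x ((L-1)+1):ℝ)) := by
            rw [← hSsum_digits, hSL]; ring
          rw [hD, abs_le]
          have hnL : (0:ℝ) ≤ (n:ℝ) - L := by
            have : (L:ℝ) ≤ n := by exact_mod_cast hLn
            linarith
          constructor <;> [linarith [abs_le.1 hsigL]; linarith [abs_le.1 hsigL]]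
        have hBmono : (Bsum x (L-1) : ℝ) ≤ (Bsum x n : ℝ) := by
          exact_mod_cast Bsum_mono x (show L - 1 ≤ n by omega)
        have hA : ((L:ℝ) - 1) - 2*(Bsum x n) ≤ Ssum x (L-1) := by
          rw [Ssum_eq, hcastL]
          linarith
        linarith
  · -- no crossing at all : L > n
    left
    have hnc : ∀ k ∈ Finset.range n, (dZ (2^k * v) - dZ (2^k * u)) / 2^k
        = (1 - 2*(binDigit x (k+1):ℝ)) * (v - u) := by
      intro k hk
      rw [Finset.mem_range] at hk
      rw [slope_nc x u v k hu0 huv hxuv (hf0 k) (hf12 k) (hlen k hk)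
        (hmin (k+1) (by omega))]
      have h2k : ((2:ℝ)^k) ≠ 0 := by positivity
      field_simp
    have hEq : takagi v - takagi u = (Ssum x n)*(v-u) + 0*0 + R := by
      rw [hR, Finset.sum_congr rfl hnc, ← Finset.sum_mul]
      unfold Ssum
      ring
    have hqb := hqbound _ _ _ (by rw [abs_zero]; linarith) hEq
    rw [abs_zero, Ssum_eq] at hqb
    linarith
theorem takagi_deriv_top_of_density
    (x : ℝ) (hx : x ∈ Set.Ioo (0:ℝ) 1) (hnd : ¬ IsDyadic x)
    (d : ℝ)
    (hd : Tendsto (fun n : ℕ =>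
        (∑ k ∈ Finset.range n, (binDigit x (k+1) : ℝ)) / n) atTop (𝓝 d))
    (hd0 : 0 < d) (hd12 : d < 1/2) :
    Tendsto (fun h => (takagi (x + h) - takagi x) / h) (𝓝[≠] (0:ℝ)) atTop := by
  obtain ⟨hx0, hx1⟩ := hx
  rw [tendsto_atTop]
  intro C
  have hdB : Tendsto (fun n : ℕ => (Bsum x n : ℝ)/n) atTop (𝓝 d) := by
    have he : (fun n : ℕ => (Bsum x n : ℝ)/n)
        = fun n : ℕ => (∑ k ∈ Finset.range n, (binDigit x (k+1) : ℝ)) / n := by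
      funext n
      rw [Bsum, Nat.cast_sum]
    rw [he]
    exact hd
  obtain ⟨N, -, hN⟩ := key_bound (Bsum x) (Bsum_mono x) d hd0 hd12 hdB C
  set δ0 : ℝ := min ((1/2)^(N+1)) (min x (1-x)) with hδ0def
  have hδ0pos : 0 < δ0 := by
    apply lt_min (by positivity) (lt_min hx0 (by linarith))
  have h1 : ∀ᶠ e in 𝓝 (0:ℝ), |e| < δ0 := by
    have := eventually_abs_sub_lt (0:ℝ) hδ0pos
    simpa using this
  have h2 : ∀ᶠ e in 𝓝[≠] (0:ℝ), e ≠ 0 := by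
    have := eventually_mem_nhdsWithin (a := (0:ℝ)) (s := {(0:ℝ)}ᶜ)
    simpa using this
  filter_upwards [h1.filter_mono nhdsWithin_le_nhds, h2] with e he hne
  -- build the scale n
  have he0 : 0 < |e| := abs_pos.2 hne
  have heN : |e| < (1/2)^(N+1) := lt_of_lt_of_le he (min_le_left _ _)
  have hex : |e| < x := lt_of_lt_of_le he (le_trans (min_le_right _ _) (min_le_left _ _))
  have hex1 : |e| < 1 - x := lt_of_lt_of_le he (le_trans (min_le_right _ _) (min_le_right _ _))
  have hxh : x + e ∈ Ioo (0:ℝ) 1 := by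
    obtain ⟨ha1, ha2⟩ := abs_lt.1 hex
    obtain ⟨hc1, hc2⟩ := abs_lt.1 hex1
    exact ⟨by linarith, by linarith⟩
  have hinv1 : 1 < |e|⁻¹ := by
    rw [lt_inv_comm₀ (by norm_num) he0]
    calc |e| < (1/2)^(N+1) := heN
    _ ≤ 1 := by apply pow_le_one₀ <;> norm_num
    _ = 1⁻¹ := by norm_num
  set b : ℕ := ⌊|e|⁻¹⌋₊ with hbdef
  have hb1 : 1 ≤ b := Nat.le_floor (by exact_mod_cast hinv1.le)
  set n : ℕ := Nat.log 2 b with hndef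
  have hpow_le : (2:ℝ)^n ≤ |e|⁻¹ := by
    have hp1 : (2:ℕ)^n ≤ b := Nat.pow_log_le_self 2 (by omega)
    have hp2 : ((2:ℕ)^n : ℝ) ≤ (b:ℝ) := by exact_mod_cast hp1
    have hp3 : (b:ℝ) ≤ |e|⁻¹ := Nat.floor_le (by positivity)
    push_cast at hp2
    linarith
  have hpow_gt : |e|⁻¹ < (2:ℝ)^(n+1) := by
    have hp1 : b < 2^(n+1) := Nat.lt_pow_succ_log_self (by norm_num) b
    have hp2 : (b:ℝ) + 1 ≤ ((2:ℕ)^(n+1) : ℝ) := by exact_mod_cast hp1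
    have hp3 : |e|⁻¹ < (b:ℝ) + 1 := Nat.lt_floor_add_one _
    push_cast at hp2
    linarith
  have h2n : (0:ℝ) < 2^n := by positivity
  have h2n1 : (0:ℝ) < 2^(n+1) := by positivity
  have hn1 : |e| ≤ (1/2)^n := by
    have hm : |e| * 2^n ≤ 1 := by
      have h5 := mul_le_mul_of_nonneg_left hpow_le he0.le
      rwa [mul_inv_cancel₀ he0.ne'] at h5
    rw [show ((1:ℝ)/2)^n = 1/(2^n) by rw [div_pow, one_pow], le_div_iff₀ h2n]
    linarith
  have hn2 : (1/2)^(n+1) ≤ |e| := by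
    have hm : 1 ≤ |e| * 2^(n+1) := by
      have h5 := mul_le_mul_of_nonneg_left hpow_gt.le he0.le
      rwa [mul_inv_cancel₀ he0.ne'] at h5
    rw [show ((1:ℝ)/2)^(n+1) = 1/(2^(n+1)) by rw [div_pow, one_pow], div_le_iff₀ h2n1]
    linarith
  have hnN : N ≤ n := by
    by_contra hcon
    push_neg at hcon
    have hp : ((1:ℝ)/2)^(n+1) < (1/2)^(N+1) := lt_of_le_of_lt hn2 heN
    have : N + 1 < n + 1 := by
      exact (pow_lt_pow_iff_right_of_lt_one₀ (by norm_num) (by norm_num)).1 hp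
    omega
  obtain ⟨hb1', hb2'⟩ := hN n hnN
  rcases main_est x ⟨hx0, hx1⟩ hnd e hne hxh n hn1 hn2 with hcase | ⟨L, hL1, hLn, hBL, hq⟩
  · linarith
  · linarith [hb2' L hLn hBL]
end
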